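/- arXiv:2502.07933 — 13 statements merged into one kernel-verified Lean document; each statement's English description precedes it below -/
import Mathlib

section
/- If the skeleton of a digraph D is bipartite, then the arcs of D can be partitioned into at most 2 classes, each inducing a weak locally irregular subdigraph. -/
/- A digraph on vertex set `V` is given by its finite arc set `E ⊆ V × V`
(arcs in both directions between two vertices are allowed, loops are excluded
via explicit hypotheses). -/

/-- The outdegree of a vertex. -/
def outdeg {V : Type*} [DecidableEq V] (E : Finset (V × V)) (v : V) : ℕ :=
  (E.filter fun a => a.1 = v).card

/-- The indegree of a vertex. -/
def indeg {V : Type*} [DecidableEq V] (E : Finset (V × V)) (v : V) : ℕ :=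
  (E.filter fun a => a.2 = v).card

/-- The balanced degree of a vertex. -/
def bdeg {V : Type*} [DecidableEq V] (E : Finset (V × V)) (v : V) : ℤ :=
  (outdeg E v : ℤ) - (indeg E v : ℤ)

/-- A digraph is weak locally irregular if the endpoints of every arc have
different outdegree-indegree pairs. -/
def WeakLI {V : Type*} [DecidableEq V] (E : Finset (V × V)) : Prop :=
  ∀ a ∈ E, (outdeg E a.1, indeg E a.1) ≠ (outdeg E a.2, indeg E a.2)

/-- A digraph is strong locally irregular if the endpoints of every arc have
different balanced degrees. -/
def StrongLI {V : Type*} [DecidableEq V] (E : Finset (V × V)) : Prop :=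
  ∀ a ∈ E, bdeg E a.1 ≠ bdeg E a.2

/-- `lirLe E n` : the arcs of `E` admit a coloring with at most `n` colors in
which every color class induces a weak locally irregular digraph. -/
def lirLe {V : Type*} [DecidableEq V] (E : Finset (V × V)) (n : ℕ) : Prop :=
  ∃ c : V × V → Fin n, ∀ i : Fin n, WeakLI (E.filter fun a => c a = i)

/-- `slirLe E n` : the arcs of `E` admit a coloring with at most `n` colors in
which every color class induces a strong locally irregular digraph. -/
def slirLe {V : Type*} [DecidableEq V] (E : Finset (V × V)) (n : ℕ) : Prop :=
  ∃ c : V × V → Fin n, ∀ i : Fin n, StrongLI (E.filter fun a => c a = i)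

/-- The skeleton of a digraph: the simple graph obtained by replacing each arc
or pair of opposite arcs with a single edge. -/
def skeleton {V : Type*} [DecidableEq V] (E : Finset (V × V)) : SimpleGraph V where
  Adj u v := u ≠ v ∧ ((u, v) ∈ E ∨ (v, u) ∈ E)
  symm := by
    constructor
    intro u v h
    exact ⟨h.1.symm, h.2.elim Or.inr Or.inl⟩
  loopless := by
    constructor
    intro v h
    exact h.1 rfl

/-- `E'` is an orientation of the simple graph `G`: its arcs lie on edges of `G`
and every edge of `G` receives exactly one direction. -/
def IsOrientationOf {V : Type*} [DecidableEq V] (E' : Finset (V × V))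
    (G : SimpleGraph V) : Prop :=
  (∀ a ∈ E', G.Adj a.1 a.2) ∧ (∀ u v : V, G.Adj u v → ((u, v) ∈ E' ↔ (v, u) ∉ E'))

/-- An outdegree-decreasing acyclic digraph: vertices can be linearly ordered so
that every arc goes forward and outdegrees are nonincreasing along the order. -/
def OutdegDecAcyclic {V : Type*} [DecidableEq V] (E : Finset (V × V)) : Prop :=
  ∃ r : V → ℕ, Function.Injective r ∧ (∀ a ∈ E, r a.1 ≤ r a.2) ∧
    ∀ u v : V, r u < r v → outdeg E v ≤ outdeg E u

/-- An indegree-increasing acyclic digraph: vertices can be linearly ordered so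
that every arc goes backward and indegrees are nondecreasing along the order. -/
def IndegIncAcyclic {V : Type*} [DecidableEq V] (E : Finset (V × V)) : Prop :=
  ∃ r : V → ℕ, Function.Injective r ∧ (∀ a ∈ E, r a.2 ≤ r a.1) ∧
    ∀ u v : V, r u ≤ r v → indeg E u ≤ indeg E v

theorem stmt0 {V : Type*} [DecidableEq V] (E : Finset (V × V))
    (hloop : ∀ v : V, (v, v) ∉ E)
    (hbip : (skeleton E).Colorable 2) :
    lirLe E 2 := by
  obtain ⟨C⟩ := hbip
  refine ⟨fun a => C a.1, ?_⟩
  intro i a ha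
  rw [Finset.mem_filter] at ha
  obtain ⟨haE, hci⟩ := ha
  set F := E.filter (fun a => C a.1 = i) with hF
  have hmemE : ∀ b : V × V, b ∈ E → b.1 ≠ b.2 := by
    intro b hb h
    have hb' : b = (b.1, b.1) := Prod.ext rfl h.symm
    rw [hb'] at hb
    exact hloop b.1 hb
  have hadj : ∀ b : V × V, b ∈ E → (skeleton E).Adj b.1 b.2 := by
    intro b hb
    exact ⟨hmemE b hb, Or.inl (by simpa using hb)⟩
  have hc2 : C a.2 ≠ i := by
    intro h
    exact C.valid (hadj a haE) (hci.trans h.symm)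
  have houtpos : 0 < outdeg F a.1 := by
    refine Finset.card_pos.mpr ⟨a, ?_⟩
    rw [Finset.mem_filter]
    exact ⟨by rw [hF, Finset.mem_filter]; exact ⟨haE, hci⟩, rfl⟩
  have hin1 : indeg F a.1 = 0 := by
    refine Finset.card_eq_zero.mpr (Finset.eq_empty_iff_forall_notMem.mpr ?_)
    intro b hb
    rw [Finset.mem_filter, hF, Finset.mem_filter] at hb
    obtain ⟨⟨hbE, hbc⟩, hb2⟩ := hb
    have := C.valid (hadj b hbE)
    rw [hb2] at this
    exact this (hbc.trans hci.symm)
  have hout2 : outdeg F a.2 = 0 := by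
    refine Finset.card_eq_zero.mpr (Finset.eq_empty_iff_forall_notMem.mpr ?_)
    intro b hb
    rw [Finset.mem_filter, hF, Finset.mem_filter] at hb
    obtain ⟨⟨hbE, hbc⟩, hb1⟩ := hb
    rw [hb1] at hbc
    exact hc2 hbc
  intro heq
  rw [Prod.mk.injEq] at heq
  rw [heq.1, hout2] at houtpos
  exact Nat.lt_irrefl 0 houtpos
end

section
/- If the skeleton of a digraph D is 3-partite (i.e., properly vertex 3-colorable), then lir(D) ≤ 2. -/
lemma auxWLI {V : Type*} [DecidableEq V] (F : Finset (V × V)) (f : V → ℕ)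
    (hb : ∀ v, f v < 3) (hmono : ∀ b ∈ F, f b.1 < f b.2) : WeakLI F := by
  intro a ha
  have h1 := hmono a ha
  by_cases h0 : f a.1 = 0
  · have hin1 : indeg F a.1 = 0 := by
      unfold indeg
      rw [Finset.card_eq_zero, Finset.filter_eq_empty_iff]
      intro b hbF hb2
      have h3 := hmono b hbF
      rw [hb2] at h3
      omega
    have hin2 : 0 < indeg F a.2 := by
      unfold indeg
      exact Finset.card_pos.2 ⟨a, Finset.mem_filter.2 ⟨ha, rfl⟩⟩
    intro h
    rw [Prod.mk.injEq] at h
    omega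
  · have h2 : f a.2 = 2 := by have := hb a.2; omega
    have hout2 : outdeg F a.2 = 0 := by
      unfold outdeg
      rw [Finset.card_eq_zero, Finset.filter_eq_empty_iff]
      intro b hbF hb1
      have h3 := hmono b hbF
      rw [hb1] at h3
      have := hb b.2
      omega
    have hout1 : 0 < outdeg F a.1 := by
      unfold outdeg
      exact Finset.card_pos.2 ⟨a, Finset.mem_filter.2 ⟨ha, rfl⟩⟩
    intro h
    rw [Prod.mk.injEq] at h
    omega

theorem stmt1 {V : Type*} [DecidableEq V] (E : Finset (V × V))
    (hloop : ∀ v : V, (v, v) ∉ E)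
    (htri : (skeleton E).Colorable 3) :
    lirLe E 2 := by
  obtain ⟨χ⟩ := htri
  have hvalid : ∀ a ∈ E, ((χ a.1 : ℕ)) ≠ ((χ a.2 : ℕ)) := by
    intro a haE
    have hne : a.1 ≠ a.2 := by
      intro h
      apply hloop a.1
      have : ((a.1, a.2) : V × V) ∈ E := by rwa [Prod.mk.eta]
      rwa [← h] at this
    have hv : χ a.1 ≠ χ a.2 := χ.valid ⟨hne, Or.inl (by rwa [Prod.mk.eta])⟩
    exact fun h => hv (Fin.val_injective h)
  refine ⟨fun a => if (χ a.1 : ℕ) < (χ a.2 : ℕ) then 0 else 1, ?_⟩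
  intro i
  fin_cases i
  · apply auxWLI _ (fun v => (χ v : ℕ)) (fun v => (χ v).isLt)
    intro b hbF
    obtain ⟨hbE, hbc⟩ := Finset.mem_filter.1 hbF
    simp only at hbc
    split_ifs at hbc with hcond
    · exact hcond
    · exact absurd hbc (by decide)
  · apply auxWLI _ (fun v => 2 - (χ v : ℕ)) (fun v => by show 2 - (χ v : ℕ) < 3; omega)
    intro b hbF
    obtain ⟨hbE, hbc⟩ := Finset.mem_filter.1 hbF
    simp only at hbc
    show 2 - (χ b.1 : ℕ) < 2 - (χ b.2 : ℕ)
    split_ifs at hbc with hcond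
    · exact absurd hbc (by decide)
    · have := hvalid b hbE
      have := (χ b.1).isLt
      have := (χ b.2).isLt
      omega
end

section
/- If the skeleton of a digraph D has chromatic number at most 6, then lir(D) ≤ 3. -/
/-- Role table: each of the 6 vertex colors gets, for each of the 3 arc classes,
a role: `0` = only tail, `1` = only head, `2` = free. -/
def sVec : Fin 6 → Fin 3 → Fin 3 := ![![0,0,1], ![0,1,0], ![0,2,2], ![1,0,0], ![2,0,2], ![2,2,0]]

/-- An arc from color `a` to color `b` may be placed in class `i`. -/
def okAB (a b : Fin 6) (i : Fin 3) : Prop :=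
  (sVec a i = 0 ∨ sVec b i = 1) ∧ sVec a i ≠ 1 ∧ sVec b i ≠ 0

instance (a b : Fin 6) (i : Fin 3) : Decidable (okAB a b i) := by
  unfold okAB; infer_instance

/-- The class chosen for an arc from color `a` to color `b`. -/
def kFun (a b : Fin 6) : Fin 3 :=
  if okAB a b 0 then 0 else if okAB a b 1 then 1 else 2

lemma kFun_ok : ∀ a b : Fin 6, a ≠ b → okAB a b (kFun a b) := by decide

theorem stmt2 {V : Type*} [DecidableEq V] (E : Finset (V × V))
    (hloop : ∀ v : V, (v, v) ∉ E)
    (hchrom : (skeleton E).chromaticNumber ≤ 6) :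
    lirLe E 3 := by
  have hcol : (skeleton E).Colorable 6 :=
    SimpleGraph.chromaticNumber_le_iff_colorable.mp (by exact_mod_cast hchrom)
  obtain ⟨C⟩ := hcol
  refine ⟨fun a => kFun (C a.1) (C a.2), ?_⟩
  intro i p hp
  obtain ⟨hpE, hpc⟩ := Finset.mem_filter.mp hp
  have hadj : ∀ q ∈ E, C q.1 ≠ C q.2 := by
    intro q hq
    obtain ⟨u, v⟩ := q
    have hne : u ≠ v := by
      intro h
      rw [← h] at hq
      exact hloop u hq
    exact C.valid ⟨hne, Or.inl hq⟩
  have hok : ∀ q ∈ E.filter (fun a => kFun (C a.1) (C a.2) = i),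
      okAB (C q.1) (C q.2) i := by
    intro q hq
    obtain ⟨h1, h2⟩ := Finset.mem_filter.mp hq
    exact h2 ▸ kFun_ok _ _ (hadj q h1)
  obtain ⟨hor, hne1, hne0⟩ := hok p hp
  have hin2 : 1 ≤ indeg (E.filter (fun a => kFun (C a.1) (C a.2) = i)) p.2 :=
    Finset.card_pos.mpr ⟨p, Finset.mem_filter.mpr ⟨hp, rfl⟩⟩
  have hout1 : 1 ≤ outdeg (E.filter (fun a => kFun (C a.1) (C a.2) = i)) p.1 :=
    Finset.card_pos.mpr ⟨p, Finset.mem_filter.mpr ⟨hp, rfl⟩⟩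
  rcases hor with h0 | h1
  · have hin1 : indeg (E.filter (fun a => kFun (C a.1) (C a.2) = i)) p.1 = 0 := by
      apply Finset.card_eq_zero.mpr
      rw [Finset.filter_eq_empty_iff]
      intro q hq hq2
      exact (hok q hq).2.2 (by rw [hq2]; exact h0)
    intro heq
    have := congrArg Prod.snd heq
    simp only at this
    omega
  · have hout2 : outdeg (E.filter (fun a => kFun (C a.1) (C a.2) = i)) p.2 = 0 := by
      apply Finset.card_eq_zero.mpr
      rw [Finset.filter_eq_empty_iff]
      intro q hq hq1
      exact (hok q hq).2.1 (by rw [hq1]; exact h1)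
    intro heq
    have := congrArg Prod.fst heq
    simp only at this
    omega
end

section
/- If the skeleton of a digraph D is k-partite for some k ∈ {7,8,9}, then lir(D) ≤ 4. -/
/-- Nine pairwise-incomparable vectors in `{0,1,2}^4` (each of coordinate sum 4). -/
def lirTable : Fin 9 → Fin 4 → ℕ :=
  ![![2,2,0,0], ![2,0,2,0], ![2,0,0,2], ![0,2,2,0], ![0,2,0,2], ![0,0,2,2],
    ![1,1,1,1], ![2,1,1,0], ![0,1,1,2]]

lemma lirTable_le : ∀ (i : Fin 9) (t : Fin 4), lirTable i t ≤ 2 := by decide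

lemma lirTable_key : ∀ i j : Fin 9, i ≠ j → ∃ t : Fin 4, lirTable i t < lirTable j t := by
  decide

theorem stmt4 {V : Type*} [DecidableEq V] (E : Finset (V × V))
    (hloop : ∀ v : V, (v, v) ∉ E) (k : ℕ) (hk : k ∈ ({7, 8, 9} : Set ℕ))
    (hpart : (skeleton E).Colorable k) :
    lirLe E 4 := by
  classical
  have h9 : k ≤ 9 := by
    rcases hk with h | h | h <;> simp_all
  obtain ⟨C⟩ := hpart.mono h9
  refine ⟨fun a => if h : C a.1 = C a.2 then 0
      else Classical.choose (lirTable_key _ _ h), fun i => ?_⟩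
  set c : V × V → Fin 4 := fun a => if h : C a.1 = C a.2 then 0
      else Classical.choose (lirTable_key _ _ h) with hc
  set S : Finset (V × V) := E.filter fun a => c a = i with hS
  have hstep : ∀ b ∈ S, lirTable (C b.1) i < lirTable (C b.2) i := by
    intro b hb
    obtain ⟨hbE, hbc⟩ := Finset.mem_filter.mp hb
    have hne : b.1 ≠ b.2 := by
      intro h
      have heta : (b.1, b.2) = b := rfl
      rw [← heta, ← h] at hbE
      exact hloop _ hbE
    have hadj : (skeleton E).Adj b.1 b.2 := ⟨hne, Or.inl (by exact hbE)⟩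
    have hC : C b.1 ≠ C b.2 := C.valid hadj
    have hcb : c b = Classical.choose (lirTable_key _ _ hC) := dif_neg hC
    have hspec := Classical.choose_spec (lirTable_key (C b.1) (C b.2) hC)
    rw [← hcb, hbc] at hspec
    exact hspec
  intro a ha
  have hav := hstep a ha
  have hbd : ∀ w : V, lirTable (C w) i ≤ 2 := fun w => lirTable_le _ _
  by_cases h0 : lirTable (C a.1) i = 0
  · -- a.1 is a source in the class, a.2 has positive indegree
    have hiu : indeg S a.1 = 0 := by
      rw [indeg, Finset.card_eq_zero, Finset.filter_eq_empty_iff]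
      intro b hb hb2
      have h1 := hstep b hb
      rw [hb2, h0] at h1
      omega
    have hiv : 0 < indeg S a.2 := by
      rw [indeg, Finset.card_pos]
      exact ⟨a, Finset.mem_filter.mpr ⟨ha, rfl⟩⟩
    intro heq
    have := congrArg Prod.snd heq
    simp only at this
    omega
  · -- a.2 is a sink in the class, a.1 has positive outdegree
    have hv2 : lirTable (C a.2) i = 2 := by
      have := hbd a.2
      omega
    have hov : outdeg S a.2 = 0 := by
      rw [outdeg, Finset.card_eq_zero, Finset.filter_eq_empty_iff]
      intro b hb hb1
      have h1 := hstep b hb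
      have h2 := hbd b.2
      rw [hb1, hv2] at h1
      omega
    have hou : 0 < outdeg S a.1 := by
      rw [outdeg, Finset.card_pos]
      exact ⟨a, Finset.mem_filter.mpr ⟨ha, rfl⟩⟩
    intro heq
    have := congrArg Prod.fst heq
    simp only at this
    omega
end

section
/- Let G be the skeleton of a digraph D. If every orientation D' of G satisfies lir(D') ≤ k, then lir(D) ≤ k+1. -/
lemma indeg_mono {V : Type*} [DecidableEq V] {F S : Finset (V × V)} (h : F ⊆ S) (v : V) :
    indeg F v ≤ indeg S v :=
  Finset.card_le_card (Finset.filter_subset_filter _ h)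

/-- Borowiecki–Grytczuk–Pilśniak: every (finite, symmetric, loopless) graph, given
here as a symmetric arc set, admits an orientation in which adjacent vertices have
different indegrees. -/
lemma bgp {V : Type*} [DecidableEq V] :
    ∀ n (S : Finset (V × V)), S.card ≤ n → (∀ v, (v, v) ∉ S) →
    (∀ a ∈ S, a.swap ∈ S) →
    ∃ F, F ⊆ S ∧ (∀ a ∈ S, (a ∈ F ↔ a.swap ∉ F)) ∧
      ∀ a ∈ F, indeg F a.1 ≠ indeg F a.2 := by
  intro n
  induction n with
  | zero =>
    intro S hcard _ _
    have : S = ∅ := Finset.card_eq_zero.mp (Nat.le_zero.mp hcard)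
    subst this
    exact ⟨∅, by simp, by simp, by simp⟩
  | succ n ih =>
    intro S hcard hloop hsym
    rcases S.eq_empty_or_nonempty with rfl | hne
    · exact ⟨∅, by simp, by simp, by simp⟩
    have himg : (S.image Prod.snd).Nonempty := hne.image _
    obtain ⟨v, hv, hvmax⟩ := Finset.exists_max_image (S.image Prod.snd) (indeg S) himg
    have hmax : ∀ u, indeg S u ≤ indeg S v := by
      intro u
      by_cases hu : u ∈ S.image Prod.snd
      · exact hvmax u hu
      · have hemp : S.filter (fun a => a.2 = u) = ∅ := by
          apply Finset.filter_eq_empty_iff.mpr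
          intro a ha hau
          exact hu (Finset.mem_image.mpr ⟨a, ha, hau⟩)
        simp [indeg, hemp]
    obtain ⟨a0, ha0, ha0v⟩ := Finset.mem_image.mp hv
    set S' := S.filter (fun a => a.1 ≠ v ∧ a.2 ≠ v) with hS'
    have hS'sub : S' ⊆ S := Finset.filter_subset _ _
    have hS'card : S'.card ≤ n := by
      have hss : S' ⊂ S := by
        refine ⟨hS'sub, fun hsub => ?_⟩
        have hmem := hsub ha0
        rw [hS', Finset.mem_filter] at hmem
        exact hmem.2.2 ha0v
      have := Finset.card_lt_card hss
      omega
    have hS'loop : ∀ u, (u, u) ∉ S' := fun u hh => hloop u (hS'sub hh)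
    have hS'sym : ∀ a ∈ S', a.swap ∈ S' := by
      intro a ha
      rw [hS', Finset.mem_filter] at ha ⊢
      exact ⟨hsym a ha.1, ha.2.2, ha.2.1⟩
    obtain ⟨F', hF'sub, hF'or, hF'ind⟩ := ih S' hS'card hS'loop hS'sym
    have hF'S : ∀ a ∈ F', a.1 ≠ v ∧ a.2 ≠ v := by
      intro a ha
      have := hF'sub ha
      rw [hS', Finset.mem_filter] at this
      exact this.2
    set Nin := S.filter (fun a => a.2 = v) with hNin
    have hindne : ∀ u, u ≠ v → indeg (F' ∪ Nin) u = indeg F' u := by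
      intro u hu
      unfold indeg
      rw [Finset.filter_union]
      have hemp : Nin.filter (fun a => a.2 = u) = ∅ := by
        apply Finset.filter_eq_empty_iff.mpr
        intro a ha hau
        rw [hNin, Finset.mem_filter] at ha
        exact hu (hau.symm.trans ha.2)
      rw [hemp, Finset.union_empty]
    have hindv : indeg (F' ∪ Nin) v = indeg S v := by
      unfold indeg
      rw [Finset.filter_union]
      have h1 : F'.filter (fun a => a.2 = v) = ∅ := by
        apply Finset.filter_eq_empty_iff.mpr
        intro a ha hav
        exact (hF'S a ha).2 hav
      have h2 : Nin.filter (fun a => a.2 = v) = Nin := by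
        apply Finset.filter_eq_self.mpr
        intro a ha
        rw [hNin, Finset.mem_filter] at ha
        exact ha.2
      rw [h1, h2, Finset.empty_union, hNin]
    have hstrict : ∀ u, (v, u) ∈ S → indeg S' u < indeg S u := by
      intro u hu
      apply Finset.card_lt_card
      refine ⟨Finset.filter_subset_filter _ hS'sub, fun hsub => ?_⟩
      have hm : (v, u) ∈ S.filter (fun a => a.2 = u) := Finset.mem_filter.mpr ⟨hu, rfl⟩
      have := hsub hm
      rw [Finset.mem_filter, hS', Finset.mem_filter] at this
      exact this.1.2.1 rfl
    refine ⟨F' ∪ Nin, ?_, ?_, ?_⟩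
    · exact Finset.union_subset (hF'sub.trans hS'sub) (Finset.filter_subset _ _)
    · rintro ⟨x, y⟩ ha
      simp only [Prod.swap_prod_mk]
      have hxy : x ≠ y := by
        intro hh; subst hh; exact hloop x ha
      by_cases h2v : y = v
      · subst h2v
        have haF : (x, y) ∈ F' ∪ Nin :=
          Finset.mem_union_right _ (Finset.mem_filter.mpr ⟨ha, rfl⟩)
        constructor
        · intro _ hsw
          rcases Finset.mem_union.mp hsw with hh | hh
          · exact (hF'S _ hh).1 rfl
          · rw [hNin, Finset.mem_filter] at hh
            exact hxy hh.2
        · intro _; exact haF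
      · by_cases h1v : x = v
        · subst h1v
          have hnotin : (x, y) ∉ F' ∪ Nin := by
            intro hh
            rcases Finset.mem_union.mp hh with hh | hh
            · exact (hF'S _ hh).1 rfl
            · rw [hNin, Finset.mem_filter] at hh
              exact hxy hh.2.symm
          have hswin : (y, x) ∈ F' ∪ Nin :=
            Finset.mem_union_right _ (Finset.mem_filter.mpr ⟨hsym _ ha, rfl⟩)
          constructor
          · intro hh
            exact (hnotin hh).elim
          · intro hh
            exact (hh hswin).elim
        · have haS' : (x, y) ∈ S' := Finset.mem_filter.mpr ⟨ha, h1v, h2v⟩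
          have e1 : (x, y) ∈ F' ∪ Nin ↔ (x, y) ∈ F' := by
            rw [Finset.mem_union, hNin, Finset.mem_filter]
            simp [h2v]
          have e2 : (y, x) ∈ F' ∪ Nin ↔ (y, x) ∈ F' := by
            rw [Finset.mem_union, hNin, Finset.mem_filter]
            simp [h1v]
          rw [e1]
          have := hF'or _ haS'
          simp only [Prod.swap_prod_mk] at this ⊢
          rw [this, e2]
    · rintro ⟨x, y⟩ ha
      rcases Finset.mem_union.mp ha with hh | hh
      · obtain ⟨h1, h2⟩ := hF'S _ hh
        simp only at h1 h2 ⊢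
        rw [hindne _ h1, hindne _ h2]
        exact hF'ind _ hh
      · rw [hNin, Finset.mem_filter] at hh
        obtain ⟨haS, h2v⟩ := hh
        simp only at h2v
        subst h2v
        have h1v : x ≠ y := by
          intro hhh; subst hhh; exact hloop x haS
        simp only
        rw [hindne _ h1v, hindv]
        have hle : indeg F' x ≤ indeg S' x := indeg_mono hF'sub _
        have hvx : (y, x) ∈ S := hsym _ haS
        have hlt : indeg S' x < indeg S x := hstrict x hvx
        exact Nat.ne_of_lt (lt_of_le_of_lt hle (lt_of_lt_of_le hlt (hmax x)))

theorem stmt7 {V : Type*} [DecidableEq V] (E : Finset (V × V))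
    (hloop : ∀ v : V, (v, v) ∉ E) (k : ℕ)
    (h : ∀ E' : Finset (V × V), IsOrientationOf E' (skeleton E) → lirLe E' k) :
    lirLe E (k + 1) := by
  classical
  set S := E.filter (fun a => a.swap ∈ E) with hS
  have hSsub : S ⊆ E := Finset.filter_subset _ _
  have hSloop : ∀ v, (v, v) ∉ S := fun v hh => hloop v (hSsub hh)
  have hSsym : ∀ a ∈ S, a.swap ∈ S := by
    intro a ha
    rw [hS, Finset.mem_filter] at ha ⊢
    exact ⟨ha.2, by rw [Prod.swap_swap]; exact ha.1⟩
  obtain ⟨F, hFsub, hFor, hFind⟩ := bgp S.card S le_rfl hSloop hSsym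
  have hFE : F ⊆ E := hFsub.trans hSsub
  set E' := E \ F with hE'
  have horient : IsOrientationOf E' (skeleton E) := by
    constructor
    · rintro ⟨x, y⟩ ha
      rw [hE', Finset.mem_sdiff] at ha
      refine ⟨?_, Or.inl ha.1⟩
      intro hh
      simp only at hh
      subst hh
      exact hloop x ha.1
    · intro u v hadj
      by_cases h1 : (u, v) ∈ E
      · by_cases h2 : (v, u) ∈ E
        · have huvS : (u, v) ∈ S := Finset.mem_filter.mpr ⟨h1, h2⟩
          have := hFor _ huvS
          simp only [Prod.swap_prod_mk] at this
          rw [hE']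
          simp only [Finset.mem_sdiff]
          constructor
          · rintro ⟨-, hnF⟩ ⟨-, hnF'⟩
            exact hnF (this.mpr hnF')
          · intro hh
            refine ⟨h1, fun hF => ?_⟩
            exact hh ⟨h2, this.mp hF⟩
        · have hnS : (u, v) ∉ S := by
            rw [hS, Finset.mem_filter]
            rintro ⟨-, hh⟩
            exact h2 hh
          have hnF : (u, v) ∉ F := fun hh => hnS (hFsub hh)
          rw [hE']
          simp only [Finset.mem_sdiff]
          constructor
          · rintro - ⟨hh, -⟩
            exact h2 hh
          · intro _
            exact ⟨h1, hnF⟩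
      · by_cases h2 : (v, u) ∈ E
        · have hnS : (v, u) ∉ S := by
            rw [hS, Finset.mem_filter]
            rintro ⟨-, hh⟩
            exact h1 hh
          have hnF : (v, u) ∉ F := fun hh => hnS (hFsub hh)
          rw [hE']
          simp only [Finset.mem_sdiff]
          constructor
          · rintro ⟨hh, -⟩
            exact absurd hh h1
          · intro hh
            exact absurd ⟨h2, hnF⟩ hh
        · exact absurd hadj.2 (by simp [h1, h2])
  obtain ⟨c', hc'⟩ := h E' horient
  refine ⟨fun a => if a ∈ F then Fin.last k else (c' a).castSucc, ?_⟩
  intro i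
  refine Fin.lastCases ?_ ?_ i
  · have heq : (E.filter fun a =>
        (if a ∈ F then Fin.last k else (c' a).castSucc) = Fin.last k) = F := by
      ext a
      rw [Finset.mem_filter]
      constructor
      · rintro ⟨haE, hc⟩
        by_contra hnF
        rw [if_neg hnF] at hc
        exact (Fin.castSucc_lt_last (c' a)).ne hc
      · intro haF
        exact ⟨hFE haF, if_pos haF⟩
    rw [heq]
    intro a ha heqpair
    exact hFind a ha (congrArg Prod.snd heqpair)
  · intro j
    have heq : (E.filter fun a =>
        (if a ∈ F then Fin.last k else (c' a).castSucc) = Fin.castSucc j)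
        = E'.filter (fun a => c' a = j) := by
      ext a
      rw [Finset.mem_filter, Finset.mem_filter, hE', Finset.mem_sdiff]
      constructor
      · rintro ⟨haE, hc⟩
        by_cases haF : a ∈ F
        · rw [if_pos haF] at hc
          exact absurd hc.symm (Fin.castSucc_lt_last j).ne
        · rw [if_neg haF] at hc
          exact ⟨⟨haE, haF⟩, Fin.castSucc_injective _ hc⟩
      · rintro ⟨⟨haE, haF⟩, hcj⟩
        exact ⟨haE, by rw [if_neg haF, hcj]⟩
    rw [heq]
    exact hc' j
end

section
/- Every simple graph G admits an orientation in which adjacent vertices have different indegrees. -/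
lemma indeg_eq_outdeg_of_symm {V : Type*} [DecidableEq V] (S : Finset (V × V))
    (hsym : ∀ u v : V, (u, v) ∈ S → (v, u) ∈ S) (v : V) :
    indeg S v = outdeg S v := by
  unfold indeg outdeg
  apply Finset.card_bij (fun a _ => Prod.swap a)
  · intro a ha
    simp only [Finset.mem_filter] at ha ⊢
    exact ⟨hsym a.1 a.2 ha.1, ha.2⟩
  · intro a ha b hb h
    exact Prod.swap_injective h
  · intro b hb
    simp only [Finset.mem_filter] at hb
    exact ⟨Prod.swap b, Finset.mem_filter.2 ⟨hsym b.1 b.2 hb.1, hb.2⟩, by simp⟩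

lemma core_orient {V : Type*} [DecidableEq V] :
    ∀ S : Finset (V × V),
      (∀ u v : V, (u, v) ∈ S → (v, u) ∈ S) →
      (∀ w : V, (w, w) ∉ S) →
      ∃ E' : Finset (V × V), E' ⊆ S ∧
        (∀ u v : V, (u, v) ∈ S → ((u, v) ∈ E' ↔ (v, u) ∉ E')) ∧
        (∀ u v : V, (u, v) ∈ S → indeg E' u ≠ indeg E' v) := by
  intro S
  induction S using Finset.strongInductionOn with
  | _ S IH =>
  intro hsym hirr
  rcases S.eq_empty_or_nonempty with rfl | hS
  · exact ⟨∅, by simp, by simp, by simp⟩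
  obtain ⟨v, hvT, hmax⟩ := (S.image Prod.fst).exists_max_image (outdeg S)
      (hS.image Prod.fst)
  set S' := S.filter (fun a => a.1 ≠ v ∧ a.2 ≠ v) with hS'def
  have hsym' : ∀ u w : V, (u, w) ∈ S' → (w, u) ∈ S' := by
    intro u w h
    simp only [hS'def, Finset.mem_filter] at h ⊢
    exact ⟨hsym u w h.1, h.2.2, h.2.1⟩
  have hsub : S' ⊂ S := by
    obtain ⟨a, haS, ha1⟩ := Finset.mem_image.1 hvT
    refine Finset.filter_ssubset.2 ⟨a, haS, ?_⟩
    simp [ha1]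
  obtain ⟨E'', hsub'', hor'', hne''⟩ := IH S' hsub hsym'
      (fun w h => hirr w (Finset.mem_filter.1 h).1)
  set E' := E'' ∪ S.filter (fun a => a.2 = v) with hE'def
  have hE''v : ∀ a ∈ E'', a.1 ≠ v ∧ a.2 ≠ v :=
    fun a ha => (Finset.mem_filter.1 (hsub'' ha)).2
  have hmemE' : ∀ a : V × V, a ∈ E' ↔ a ∈ E'' ∨ (a ∈ S ∧ a.2 = v) := by
    intro a
    simp [hE'def, Finset.mem_union, Finset.mem_filter]
  have hA : ∀ w, w ≠ v → indeg E' w = indeg E'' w := by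
    intro w hw
    unfold indeg
    congr 1
    ext a
    simp only [Finset.mem_filter]
    constructor
    · rintro ⟨h1, h2⟩
      rcases (hmemE' a).1 h1 with h | h
      · exact ⟨h, h2⟩
      · exact absurd (h2 ▸ h.2) hw
    · rintro ⟨h1, h2⟩
      exact ⟨(hmemE' a).2 (Or.inl h1), h2⟩
  have hB : indeg E' v = outdeg S v := by
    rw [← indeg_eq_outdeg_of_symm S hsym v]
    unfold indeg
    congr 1
    ext a
    simp only [Finset.mem_filter]
    constructor
    · rintro ⟨h1, h2⟩
      rcases (hmemE' a).1 h1 with h | h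
      · exact absurd h2 (hE''v a h).2
      · exact ⟨h.1, h2⟩
    · rintro ⟨h1, h2⟩
      exact ⟨(hmemE' a).2 (Or.inr ⟨h1, h2⟩), h2⟩
  have hC : ∀ u, (u, v) ∈ S → indeg E' u < indeg E' v := by
    intro u huv
    have hune : u ≠ v := fun h => hirr v (h ▸ huv)
    rw [hA u hune, hB]
    have h1 : indeg E'' u ≤ outdeg S' u := by
      calc indeg E'' u ≤ indeg S' u :=
            Finset.card_le_card (Finset.filter_subset_filter _ hsub'')
        _ = outdeg S' u := indeg_eq_outdeg_of_symm S' hsym' u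
    have h2 : outdeg S' u < outdeg S u := by
      apply Finset.card_lt_card
      rw [Finset.ssubset_iff_of_subset
        (Finset.filter_subset_filter _ (Finset.filter_subset _ _))]
      refine ⟨(u, v), Finset.mem_filter.2 ⟨huv, rfl⟩, ?_⟩
      intro hcon
      exact (Finset.mem_filter.1 (Finset.mem_filter.1 hcon).1).2.2 rfl
    have h3 : outdeg S u ≤ outdeg S v :=
      hmax u (Finset.mem_image.2 ⟨(u, v), huv, rfl⟩)
    omega
  refine ⟨E', ?_, ?_, ?_⟩
  · intro a ha
    rcases (hmemE' a).1 ha with h | h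
    · exact (Finset.mem_filter.1 (hsub'' h)).1
    · exact h.1
  · intro u w huw
    by_cases hw : w = v
    · rw [hw] at huw ⊢
      have hune : u ≠ v := fun h => hirr v (h ▸ huw)
      constructor
      · intro _ hcon
        rcases (hmemE' _).1 hcon with h | h
        · exact (hE''v _ h).1 rfl
        · exact hune h.2
      · intro _
        exact (hmemE' _).2 (Or.inr ⟨huw, rfl⟩)
    · by_cases hu : u = v
      · rw [hu] at huw ⊢
        constructor
        · intro hcon
          exfalso
          rcases (hmemE' _).1 hcon with h | h
          · exact (hE''v _ h).1 rfl
          · exact hw h.2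
        · intro hcon
          exfalso
          exact hcon ((hmemE' _).2 (Or.inr ⟨hsym _ _ huw, rfl⟩))
      · have huwS' : (u, w) ∈ S' := Finset.mem_filter.2 ⟨huw, hu, hw⟩
        have e1 : ((u, w) ∈ E') ↔ ((u, w) ∈ E'') := by
          rw [hmemE']; simp [hw]
        have e2 : ((w, u) ∈ E') ↔ ((w, u) ∈ E'') := by
          rw [hmemE']; simp [hu]
        rw [e1, e2]
        exact hor'' u w huwS'
  · intro u w huw
    by_cases hw : w = v
    · rw [hw] at huw ⊢
      exact (hC u huw).ne
    · by_cases hu : u = v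
      · rw [hu] at huw ⊢
        exact (hC w (hsym _ _ huw)).ne'
      · rw [hA u hu, hA w hw]
        exact hne'' u w (Finset.mem_filter.2 ⟨huw, hu, hw⟩)

theorem stmt8 {V : Type*} [DecidableEq V] (G : SimpleGraph V)
    [Fintype G.edgeSet] :
    ∃ E' : Finset (V × V), IsOrientationOf E' G ∧
      ∀ u v : V, G.Adj u v → indeg E' u ≠ indeg E' v := by
  classical
  have hfin : {p : V × V | G.Adj p.1 p.2}.Finite := by
    have hEfin : G.edgeSet.Finite := Set.toFinite _
    have hss : {p : V × V | G.Adj p.1 p.2} ⊆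
        ⋃ e ∈ G.edgeSet, {p : V × V | s(p.1, p.2) = e} :=
      fun p hp => Set.mem_biUnion (G.mem_edgeSet.2 hp) rfl
    refine Set.Finite.subset (hEfin.biUnion ?_) hss
    intro e he
    induction e using Sym2.ind with
    | _ a b =>
      refine Set.Finite.subset
        ((Set.finite_singleton (b, a)).insert (a, b)) ?_
      intro p hp
      simp only [Set.mem_setOf_eq, Sym2.eq_iff] at hp
      rcases hp with ⟨h1, h2⟩ | ⟨h1, h2⟩
      · left
        exact Prod.ext h1 h2
      · right
        exact Prod.ext h1 h2
  obtain ⟨E', hsub, hor, hne⟩ := core_orient hfin.toFinset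
    (fun u v h => by
      rw [Set.Finite.mem_toFinset] at h ⊢
      exact h.symm)
    (fun w h => G.loopless.irrefl w (by rwa [Set.Finite.mem_toFinset] at h))
  refine ⟨E', ⟨?_, ?_⟩, ?_⟩
  · intro a ha
    have := hsub ha
    rwa [Set.Finite.mem_toFinset] at this
  · intro u v huv
    exact hor u v (by rwa [Set.Finite.mem_toFinset])
  · intro u v huv
    exact hne u v (by rwa [Set.Finite.mem_toFinset])
end

section
/- Every simple graph G admits an orientation in which adjacent vertices have different balanced degrees, where the balanced degree of a vertex v is d^+(v) - d^-(v). -/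
section AuxLemmas

variable {V : Type*} [DecidableEq V]

lemma flip_bdeg_fst (E : Finset (V × V)) {u v : V}
    (huv : (u,v) ∈ E) (hvu : (v,u) ∉ E) (hne : u ≠ v) :
    bdeg (insert (v,u) (E.erase (u,v))) u = bdeg E u - 2 := by
  have h1 : outdeg (insert (v,u) (E.erase (u,v))) u + 1 = outdeg E u := by
    unfold outdeg
    rw [Finset.filter_insert, if_neg (by simpa using hne.symm), Finset.filter_erase,
      Finset.card_erase_add_one (by simp [huv])]
  have h2 : indeg (insert (v,u) (E.erase (u,v))) u = indeg E u + 1 := by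
    unfold indeg
    rw [Finset.filter_insert, if_pos rfl, Finset.filter_erase,
      Finset.erase_eq_of_notMem (by simp [hne.symm]),
      Finset.card_insert_of_notMem (by simp [hvu])]
  unfold bdeg
  omega

lemma flip_bdeg_snd (E : Finset (V × V)) {u v : V}
    (huv : (u,v) ∈ E) (hvu : (v,u) ∉ E) (hne : u ≠ v) :
    bdeg (insert (v,u) (E.erase (u,v))) v = bdeg E v + 2 := by
  have h1 : outdeg (insert (v,u) (E.erase (u,v))) v = outdeg E v + 1 := by
    unfold outdeg
    rw [Finset.filter_insert, if_pos rfl, Finset.filter_erase,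
      Finset.erase_eq_of_notMem (by simp [hne]),
      Finset.card_insert_of_notMem (by simp [hvu])]
  have h2 : indeg (insert (v,u) (E.erase (u,v))) v + 1 = indeg E v := by
    unfold indeg
    rw [Finset.filter_insert, if_neg (by simpa using hne), Finset.filter_erase,
      Finset.card_erase_add_one (by simp [huv])]
  unfold bdeg
  omega

lemma flip_bdeg_other (E : Finset (V × V)) {u v w : V}
    (hwu : w ≠ u) (hwv : w ≠ v) :
    bdeg (insert (v,u) (E.erase (u,v))) w = bdeg E w := by
  have h1 : outdeg (insert (v,u) (E.erase (u,v))) w = outdeg E w := by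
    unfold outdeg
    rw [Finset.filter_insert, if_neg (by simpa using hwv.symm), Finset.filter_erase,
      Finset.erase_eq_of_notMem (by simp [hwu.symm])]
  have h2 : indeg (insert (v,u) (E.erase (u,v))) w = indeg E w := by
    unfold indeg
    rw [Finset.filter_insert, if_neg (by simpa using hwu.symm), Finset.filter_erase,
      Finset.erase_eq_of_notMem (by simp [hwv.symm])]
  unfold bdeg
  omega

end AuxLemmas
section AuxLemmas2

variable {V : Type*} [DecidableEq V]

lemma flip_orientation {G : SimpleGraph V} {E : Finset (V × V)} {u v : V}
    (h : IsOrientationOf E G) (huv : (u,v) ∈ E) :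
    IsOrientationOf (insert (v,u) (E.erase (u,v))) G := by
  have hadj : G.Adj u v := h.1 _ huv
  have hne : u ≠ v := hadj.ne
  have hvu : (v,u) ∉ E := (h.2 u v hadj).mp huv
  have hmemF : ∀ p : V × V, p ∈ insert (v,u) (E.erase (u,v)) ↔
      p = (v,u) ∨ (p ∈ E ∧ p ≠ (u,v)) := by
    intro p
    simp only [Finset.mem_insert, Finset.mem_erase]
    tauto
  constructor
  · intro a ha
    rcases Finset.mem_insert.mp ha with rfl | ha
    · exact hadj.symm
    · exact h.1 a (Finset.mem_of_mem_erase ha)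
  · intro x y hxy
    by_cases h1 : (x, y) = (u, v)
    · obtain ⟨rfl, rfl⟩ := Prod.ext_iff.mp h1
      refine iff_of_false ?_ (not_not_intro ((hmemF _).mpr (Or.inl rfl)))
      intro hm
      rcases (hmemF _).mp hm with hh | ⟨_, hh⟩
      · exact hne (Prod.ext_iff.mp hh).1
      · exact hh rfl
    · by_cases h2 : (x, y) = (v, u)
      · obtain ⟨rfl, rfl⟩ := Prod.ext_iff.mp h2
        refine iff_of_true ((hmemF _).mpr (Or.inl rfl)) ?_
        intro hm
        rcases (hmemF _).mp hm with hh | ⟨_, hh⟩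
        · exact hne (Prod.ext_iff.mp hh).1
        · exact hh rfl
      · have h1' : (y, x) ≠ (u, v) := by
          intro hh; obtain ⟨rfl, rfl⟩ := Prod.ext_iff.mp hh; exact h2 rfl
        have h2' : (y, x) ≠ (v, u) := by
          intro hh; obtain ⟨rfl, rfl⟩ := Prod.ext_iff.mp hh; exact h1 rfl
        have e1 : ((x, y) ∈ insert (v,u) (E.erase (u,v))) ↔ (x, y) ∈ E := by
          rw [hmemF]; simp [h1, h2]
        have e2 : ((y, x) ∈ insert (v,u) (E.erase (u,v))) ↔ (y, x) ∈ E := by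
          rw [hmemF]; simp [h1', h2']
        rw [e1, e2]
        exact h.2 x y hxy

lemma sum_sq_flip (VS : Finset V) (E F : Finset (V × V)) {u v : V}
    (hu : u ∈ VS) (hv : v ∈ VS) (hne : u ≠ v)
    (hbu : bdeg F u = bdeg E u - 2) (hbv : bdeg F v = bdeg E v + 2)
    (hother : ∀ w, w ≠ u → w ≠ v → bdeg F w = bdeg E w)
    (heq : bdeg E u = bdeg E v) :
    ∑ x ∈ VS, (bdeg F x)^2 = (∑ x ∈ VS, (bdeg E x)^2) + 8 := by
  have hv' : v ∈ VS.erase u := Finset.mem_erase.mpr ⟨hne.symm, hv⟩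
  rw [← Finset.add_sum_erase VS (fun x => (bdeg F x)^2) hu,
      ← Finset.add_sum_erase VS (fun x => (bdeg E x)^2) hu,
      ← Finset.add_sum_erase (VS.erase u) (fun x => (bdeg F x)^2) hv',
      ← Finset.add_sum_erase (VS.erase u) (fun x => (bdeg E x)^2) hv']
  have hS : ∑ x ∈ (VS.erase u).erase v, (bdeg F x)^2
      = ∑ x ∈ (VS.erase u).erase v, (bdeg E x)^2 := by
    refine Finset.sum_congr rfl fun w hw => ?_
    have h1 := Finset.mem_erase.mp hw
    have h2 := Finset.mem_erase.mp h1.2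
    rw [hother w h2.1 h1.1]
  rw [hS, hbu, hbv, heq]
  ring

end AuxLemmas2
section AuxLemmas3

variable {V : Type*} [DecidableEq V]

lemma initial_orientation (G : SimpleGraph V) [Fintype G.edgeSet] :
    IsOrientationOf (G.edgeFinset.image Quot.out) G := by
  constructor
  · intro a ha
    obtain ⟨e, he, rfl⟩ := Finset.mem_image.mp ha
    have he' : e ∈ G.edgeSet := SimpleGraph.mem_edgeFinset.mp he
    have hme : s((Quot.out e).1, (Quot.out e).2) = e := Quot.out_eq e
    exact G.mem_edgeSet.mp (by rw [hme]; exact he')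
  · intro u v hadj
    have hne : u ≠ v := hadj.ne
    have he : s(u,v) ∈ G.edgeFinset :=
      SimpleGraph.mem_edgeFinset.mpr (G.mem_edgeSet.mpr hadj)
    have hiff1 : (u,v) ∈ G.edgeFinset.image Quot.out ↔ Quot.out s(u,v) = (u,v) := by
      constructor
      · intro h
        obtain ⟨e, heF, heq⟩ := Finset.mem_image.mp h
        have : e = s(u,v) := by rw [← Quot.out_eq e, heq]
        rwa [← this]
      · intro h; exact Finset.mem_image.mpr ⟨_, he, h⟩
    have hiff2 : (v,u) ∈ G.edgeFinset.image Quot.out ↔ Quot.out s(u,v) = (v,u) := by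
      constructor
      · intro h
        obtain ⟨e, heF, heq⟩ := Finset.mem_image.mp h
        have h3 : e = s(v,u) := by rw [← Quot.out_eq e, heq]
        rw [Sym2.eq_swap] at h3
        rwa [← h3]
      · intro h
        have he2 : s(v,u) ∈ G.edgeFinset := by rwa [Sym2.eq_swap]
        exact Finset.mem_image.mpr ⟨_, he, h⟩
    have hout : Quot.out s(u,v) = (u,v) ∨ Quot.out s(u,v) = (v,u) :=
      Sym2.mk_eq_mk_iff.mp (show s((Quot.out s(u,v)).1, (Quot.out s(u,v)).2) = s(u,v) from Quot.out_eq _)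
    rw [hiff1, hiff2]
    rcases hout with h | h <;>
      simp [h, Prod.ext_iff, hne, Ne.symm hne]

end AuxLemmas3

theorem stmt9 {V : Type*} [DecidableEq V] (G : SimpleGraph V)
    [Fintype G.edgeSet] :
    ∃ E' : Finset (V × V), IsOrientationOf E' G ∧
      ∀ u v : V, G.Adj u v → bdeg E' u ≠ bdeg E' v := by
  classical
  set A : Finset (V × V) :=
    G.edgeFinset.image Quot.out ∪ G.edgeFinset.image (fun e => (Quot.out e).swap) with hA
  have hmemA : ∀ x y : V, G.Adj x y → (x,y) ∈ A := by
    intro x y hxy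
    have he : s(x,y) ∈ G.edgeFinset :=
      SimpleGraph.mem_edgeFinset.mpr (G.mem_edgeSet.mpr hxy)
    rcases (Sym2.mk_eq_mk_iff (p := Quot.out s(x,y)) (q := (x,y))).mp (Quot.out_eq _) with h | h
    · exact Finset.mem_union_left _ (Finset.mem_image.mpr ⟨_, he, h⟩)
    · exact Finset.mem_union_right _ (Finset.mem_image.mpr ⟨_, he, by rw [h]; rfl⟩)
  have hsubA : ∀ E'' : Finset (V × V), IsOrientationOf E'' G → E'' ⊆ A := by
    intro E'' h a ha
    have h2 := hmemA a.1 a.2 (h.1 a ha)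
    rwa [Prod.mk.eta] at h2
  set VS : Finset V := A.image Prod.fst ∪ A.image Prod.snd with hVS
  set S : Finset (Finset (V × V)) := A.powerset.filter (fun E'' => IsOrientationOf E'' G)
    with hSdef
  have hSmem : ∀ E'' : Finset (V × V), IsOrientationOf E'' G → E'' ∈ S := by
    intro E'' h
    exact Finset.mem_filter.mpr ⟨Finset.mem_powerset.mpr (hsubA _ h), h⟩
  have hS0 : S.Nonempty := ⟨_, hSmem _ (initial_orientation G)⟩
  obtain ⟨E', hE'S, hmax⟩ :=
    Finset.exists_max_image S (fun E'' => ∑ x ∈ VS, (bdeg E'' x)^2) hS0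
  have hor : IsOrientationOf E' G := (Finset.mem_filter.mp hE'S).2
  refine ⟨E', hor, ?_⟩
  have key : ∀ u v : V, (u,v) ∈ E' → bdeg E' u ≠ bdeg E' v := by
    intro u v huv heq
    have hadj : G.Adj u v := hor.1 _ huv
    have hne : u ≠ v := hadj.ne
    have hvu : (v,u) ∉ E' := (hor.2 u v hadj).mp huv
    have horF := flip_orientation hor huv
    have hle := hmax _ (hSmem _ horF)
    have huA : (u,v) ∈ A := hsubA E' hor huv
    have hu : u ∈ VS :=
      Finset.mem_union_left _ (Finset.mem_image.mpr ⟨(u,v), huA, rfl⟩)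
    have hv : v ∈ VS :=
      Finset.mem_union_right _ (Finset.mem_image.mpr ⟨(u,v), huA, rfl⟩)
    have hsum := sum_sq_flip VS E' (insert (v,u) (E'.erase (u,v))) hu hv hne
      (flip_bdeg_fst E' huv hvu hne) (flip_bdeg_snd E' huv hvu hne)
      (fun w hwu hwv => flip_bdeg_other E' hwu hwv) heq
    simp only [hsum] at hle
    omega
  intro u v hadj heq
  by_cases h : (u,v) ∈ E'
  · exact key u v h heq
  · have h2 : (v,u) ∈ E' := by
      by_contra h3
      exact h ((hor.2 u v hadj).mpr h3)
    exact key v u h2 heq.symm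
end

section
/- If D is an outdegree-decreasing acyclic digraph, then lir(D) ≤ 2. -/
open Finset in
lemma sel_core {V : Type*} [DecidableEq V] (H : Finset V) (σ τ : V → ℕ)
    (hστ : ∀ v ∈ H, σ v + τ v ≤ H.card) :
    ∃ A : Finset V, A ⊆ H ∧ (∀ v ∈ A, σ v ≠ A.card) ∧
      (∀ v ∈ H, v ∉ A → τ v + A.card ≠ H.card) := by
  classical
  set k := H.card with hk
  have hfeas : ∃ a, a ≤ k ∧
      Disjoint (H.filter fun v => τ v + a = k) (H.filter fun v => σ v = a) ∧
      (H.filter fun v => τ v + a = k).card ≤ a ∧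
      (H.filter fun v => σ v = a).card + a ≤ k := by
    by_contra hcon
    push_neg at hcon
    have hge : ∀ a ∈ Finset.range (k+1),
        2 ≤ (H.filter fun v => τ v + a = k).card + (H.filter fun v => σ v = a).card := by
      intro a ha
      rw [Finset.mem_range] at ha
      have ha' : a ≤ k := by omega
      by_cases hdis : Disjoint (H.filter fun v => τ v + a = k) (H.filter fun v => σ v = a)
      · have h3 := hcon a ha' hdis
        by_cases hF : (H.filter fun v => τ v + a = k).card ≤ a
        · have h4 := h3 hF
          rcases Nat.lt_or_ge a k with hak | hak
          · omega
          · have hak' : a = k := by omega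
            have hne : (H.filter fun v => σ v = a).Nonempty := Finset.card_pos.mp (by omega)
            obtain ⟨v, hv⟩ := hne
            rw [Finset.mem_filter] at hv
            have hv2 := hστ v hv.1
            have hvF : v ∈ H.filter fun v => τ v + a = k :=
              Finset.mem_filter.mpr ⟨hv.1, by omega⟩
            have : 0 < (H.filter fun v => τ v + a = k).card := Finset.card_pos.mpr ⟨v, hvF⟩
            omega
        · rcases Nat.lt_or_ge 0 a with ha0 | ha0
          · omega
          · have ha0' : a = 0 := by omega
            have hne : (H.filter fun v => τ v + a = k).Nonempty := Finset.card_pos.mp (by omega)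
            obtain ⟨v, hv⟩ := hne
            rw [Finset.mem_filter] at hv
            have hv2 := hστ v hv.1
            have hvX : v ∈ H.filter fun v => σ v = a :=
              Finset.mem_filter.mpr ⟨hv.1, by omega⟩
            have : 0 < (H.filter fun v => σ v = a).card := Finset.card_pos.mpr ⟨v, hvX⟩
            omega
      · obtain ⟨v, hv1, hv2⟩ := Finset.not_disjoint_iff.mp hdis
        have h1 : 0 < (H.filter fun v => τ v + a = k).card := Finset.card_pos.mpr ⟨v, hv1⟩
        have h2 : 0 < (H.filter fun v => σ v = a).card := Finset.card_pos.mpr ⟨v, hv2⟩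
        omega
    have hFsum : ∑ a ∈ Finset.range (k+1), (H.filter fun v => τ v + a = k).card = k := by
      have hfib := Finset.card_eq_sum_card_fiberwise (f := fun v => k - τ v) (s := H)
        (t := Finset.range (k+1))
        (fun v hv => Finset.mem_range.mpr (by have := hστ v hv; simp only; omega))
      have heq : (∑ a ∈ Finset.range (k+1), (H.filter fun v => τ v + a = k).card)
          = ∑ a ∈ Finset.range (k+1), (H.filter fun v => (fun v => k - τ v) v = a).card := by
        refine Finset.sum_congr rfl fun a ha => ?_
        congr 1
        refine Finset.filter_congr fun v hv => ?_
        have h1 := hστ v hv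
        rw [Finset.mem_range] at ha
        simp only [eq_iff_iff]
        constructor <;> intro h <;> omega
      rw [heq, ← hfib]
    have hXsum : ∑ a ∈ Finset.range (k+1), (H.filter fun v => σ v = a).card = k := by
      have hfib := Finset.card_eq_sum_card_fiberwise (f := fun v => σ v) (s := H)
        (t := Finset.range (k+1))
        (fun v hv => Finset.mem_range.mpr (by have := hστ v hv; simp only; omega))
      have heq : (∑ a ∈ Finset.range (k+1), (H.filter fun v => σ v = a).card)
          = ∑ a ∈ Finset.range (k+1), (H.filter fun v => (fun v => σ v) v = a).card := rfl
      rw [heq, ← hfib]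
    have hbig := Finset.sum_le_sum hge
    rw [Finset.sum_add_distrib, hFsum, hXsum, Finset.sum_const, Finset.card_range,
      smul_eq_mul] at hbig
    omega
  obtain ⟨a, hak, hdis, hF, hX⟩ := hfeas
  have hXle : (H.filter fun v => σ v = a).card ≤ k := Finset.card_le_card (Finset.filter_subset _ _)
  have hFsub : (H.filter fun v => τ v + a = k) ⊆ H \ (H.filter fun v => σ v = a) :=
    Finset.subset_sdiff.mpr ⟨Finset.filter_subset _ _, hdis⟩
  have hsd : (H \ (H.filter fun v => σ v = a)).card = k - (H.filter fun v => σ v = a).card := by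
    rw [Finset.card_sdiff_of_subset (Finset.filter_subset _ _)]
  obtain ⟨A, hFA, hAX, hAcard⟩ := Finset.exists_subsuperset_card_eq hFsub hF (by omega)
  refine ⟨A, fun v hv => (Finset.mem_sdiff.mp (hAX hv)).1, ?_, ?_⟩
  · intro v hv heq
    have h1 := Finset.mem_sdiff.mp (hAX hv)
    exact h1.2 (Finset.mem_filter.mpr ⟨h1.1, by omega⟩)
  · intro v hvH hvA heq
    exact hvA (hFA (Finset.mem_filter.mpr ⟨hvH, by omega⟩))

lemma pick_h {V : Type*} [DecidableEq V] (H : Finset V) (s d : V → ℕ) :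
    ∀ v ∈ H, (fun v => min (s v) (min (d v) H.card)) v
      + (fun v => min (d v) H.card - min (s v) (min (d v) H.card)) v ≤ H.card := by
  intro v _
  show min (s v) (min (d v) H.card) + (min (d v) H.card - min (s v) (min (d v) H.card))
    ≤ H.card
  have h1 : min (s v) (min (d v) H.card) ≤ min (d v) H.card := min_le_right _ _
  have h2 : min (d v) H.card ≤ H.card := min_le_right _ _
  rw [Nat.add_sub_cancel' h1]
  exact h2

noncomputable def pick {V : Type*} [DecidableEq V] (H : Finset V) (s d : V → ℕ) : Finset V :=
  (sel_core H (fun v => min (s v) (min (d v) H.card))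
    (fun v => min (d v) H.card - min (s v) (min (d v) H.card))
    (pick_h H s d)).choose

lemma pick_spec {V : Type*} [DecidableEq V] (H : Finset V) (s d : V → ℕ) :
    pick H s d ⊆ H ∧
      (∀ v ∈ pick H s d, min (s v) (min (d v) H.card) ≠ (pick H s d).card) ∧
      (∀ v ∈ H, v ∉ pick H s d →
        min (d v) H.card - min (s v) (min (d v) H.card) + (pick H s d).card ≠ H.card) :=
  (sel_core H (fun v => min (s v) (min (d v) H.card))
    (fun v => min (d v) H.card - min (s v) (min (d v) H.card))
    (pick_h H s d)).choose_spec

theorem stmt10 {V : Type*} [DecidableEq V] (E : Finset (V × V))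
    (hloop : ∀ v : V, (v, v) ∉ E)
    (h : OutdegDecAcyclic E) :
    lirLe E 2 := by
  classical
  obtain ⟨r, hinj, hfwd, hmono⟩ := h
  obtain ⟨N, hN⟩ : ∃ N : V → Finset V, ∀ u,
      N u = (E.filter fun a => a.1 = u).image Prod.snd := ⟨_, fun _ => rfl⟩
  obtain ⟨m, hm⟩ : ∃ m : V → ℕ, ∀ u,
      m u = ((E.image Prod.snd).filter fun w => r u < r w).card := ⟨_, fun _ => rfl⟩
  have hNmem : ∀ u v, v ∈ N u ↔ (u, v) ∈ E := by
    intro u v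
    rw [hN]
    simp only [Finset.mem_image, Finset.mem_filter]
    constructor
    · rintro ⟨a, ⟨haE, ha1⟩, ha2⟩
      rw [← ha1, ← ha2]
      rwa [Prod.mk.eta]
    · intro hE; exact ⟨(u, v), ⟨hE, rfl⟩, rfl⟩
  have hNcard : ∀ u, (N u).card = outdeg E u := by
    intro u
    rw [hN, outdeg, Finset.card_image_of_injOn]
    intro a ha b hb hab
    rw [Finset.mem_coe, Finset.mem_filter] at ha hb
    exact Prod.ext (ha.2.trans hb.2.symm) hab
  have hrlt : ∀ a ∈ E, r a.1 < r a.2 := by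
    intro a haE
    rcases lt_or_eq_of_le (hfwd a haE) with h | h
    · exact h
    · exfalso
      have h2 : a.1 = a.2 := hinj h
      apply hloop a.1
      rwa [show (a.1, a.1) = a from Prod.ext rfl h2]
  have hdeglt : ∀ a ∈ E, outdeg E a.2 ≤ outdeg E a.1 := fun a ha => hmono _ _ (hrlt a ha)
  have hmlt : ∀ a ∈ E, m a.2 < m a.1 := by
    intro a haE
    rw [hm, hm]
    apply Finset.card_lt_card
    have hsub2 : (Finset.filter (fun w => r a.2 < r w) (Finset.image Prod.snd E))
        ⊆ Finset.filter (fun w => r a.1 < r w) (Finset.image Prod.snd E) := by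
      intro x hx
      rw [Finset.mem_filter] at hx ⊢
      exact ⟨hx.1, lt_trans (hrlt a haE) hx.2⟩
    rw [Finset.ssubset_iff_of_subset hsub2]
    exact ⟨a.2, Finset.mem_filter.mpr ⟨Finset.mem_image_of_mem Prod.snd haE, hrlt a haE⟩,
      fun hx => absurd (Finset.mem_filter.mp hx).2 (lt_irrefl _)⟩
  obtain ⟨A, hA⟩ : ∃ A : V → Finset V, ∀ u,
      A u = pick (N u) (fun v => if h : m v < m u then (A v).card else 0) (outdeg E) := by
    have wf : WellFounded (fun x y : V => m x < m y) := InvImage.wf m Nat.lt_wfRel.wf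
    exact ⟨wf.fix (fun u ih =>
      pick (N u) (fun v => if h : m v < m u then (ih v h).card else 0) (outdeg E)),
      fun u => wf.fix_eq _ u⟩
  have hspec : ∀ u, A u ⊆ N u ∧
      (∀ v ∈ A u, min (if h : m v < m u then (A v).card else 0)
        (min (outdeg E v) ((N u).card)) ≠ (A u).card) ∧
      (∀ v ∈ N u, v ∉ A u →
        min (outdeg E v) ((N u).card) - min (if h : m v < m u then (A v).card else 0)
          (min (outdeg E v) ((N u).card)) + (A u).card ≠ (N u).card) := by
    intro u
    have hps := pick_spec (N u) (fun v => if h : m v < m u then (A v).card else 0) (outdeg E)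
    rw [← hA u] at hps
    exact hps
  have hsub : ∀ u, A u ⊆ N u := fun u => (hspec u).1
  have hAle : ∀ u, (A u).card ≤ outdeg E u :=
    fun u => (hNcard u) ▸ Finset.card_le_card (hsub u)
  have key0 : ∀ a ∈ E, a.2 ∈ A a.1 → (A a.2).card ≠ (A a.1).card := by
    intro a haE hmem
    have h1 := (hspec a.1).2.1 a.2 hmem
    rw [dif_pos (hmlt a haE), hNcard, min_eq_left (hdeglt a haE),
      min_eq_left (hAle a.2)] at h1
    exact h1
  have key1 : ∀ a ∈ E, a.2 ∉ A a.1 →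
      (outdeg E a.2 - (A a.2).card) + (A a.1).card ≠ outdeg E a.1 := by
    intro a haE hmem
    have h1 := (hspec a.1).2.2 a.2 ((hNmem a.1 a.2).mpr (by rwa [Prod.mk.eta])) hmem
    rw [dif_pos (hmlt a haE), hNcard, min_eq_left (hdeglt a haE),
      min_eq_left (hAle a.2)] at h1
    exact h1
  refine ⟨fun a => if a.2 ∈ A a.1 then (0 : Fin 2) else 1, ?_⟩
  have hout0 : ∀ u,
      outdeg (E.filter fun a => (if a.2 ∈ A a.1 then (0 : Fin 2) else 1) = 0) u
        = (A u).card := by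
    intro u
    rw [outdeg, Finset.filter_filter]
    have himg : (E.filter fun a =>
        ((if a.2 ∈ A a.1 then (0 : Fin 2) else 1) = 0) ∧ a.1 = u)
        = (A u).image (fun v => (u, v)) := by
      ext a
      simp only [Finset.mem_filter, Finset.mem_image]
      constructor
      · rintro ⟨haE, hc, h1⟩
        refine ⟨a.2, ?_, by rw [← h1]⟩
        by_cases hm2 : a.2 ∈ A a.1
        · rwa [← h1]
        · rw [if_neg hm2] at hc
          exact absurd hc (by decide)
      · rintro ⟨v, hv, hva⟩
        rw [← hva]
        refine ⟨(hNmem u v).mp (hsub u hv), ?_, rfl⟩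
        simp only [if_pos hv]
    rw [himg, Finset.card_image_of_injective _ (fun x y hxy => (Prod.ext_iff.mp hxy).2)]
  have houtsplit : ∀ u,
      outdeg (E.filter fun a => (if a.2 ∈ A a.1 then (0 : Fin 2) else 1) = 0) u
      + outdeg (E.filter fun a => (if a.2 ∈ A a.1 then (0 : Fin 2) else 1) = 1) u
      = outdeg E u := by
    intro u
    rw [outdeg, outdeg, outdeg, Finset.filter_filter, Finset.filter_filter]
    have e0 : (E.filter fun a =>
        ((if a.2 ∈ A a.1 then (0 : Fin 2) else 1) = 0) ∧ a.1 = u)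
        = (E.filter fun a => a.1 = u).filter (fun a => a.2 ∈ A a.1) := by
      rw [Finset.filter_filter]
      refine Finset.filter_congr fun a _ => ?_
      by_cases hm2 : a.2 ∈ A a.1 <;> simp [hm2]
    have e1 : (E.filter fun a =>
        ((if a.2 ∈ A a.1 then (0 : Fin 2) else 1) = 1) ∧ a.1 = u)
        = (E.filter fun a => a.1 = u).filter (fun a => ¬ a.2 ∈ A a.1) := by
      rw [Finset.filter_filter]
      refine Finset.filter_congr fun a _ => ?_
      by_cases hm2 : a.2 ∈ A a.1 <;> simp [hm2]
    rw [e0, e1, Finset.card_filter_add_card_filter_not]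
  have hW0 : WeakLI (E.filter fun a => (if a.2 ∈ A a.1 then (0 : Fin 2) else 1) = 0) := by
    intro a ha
    rw [Finset.mem_filter] at ha
    obtain ⟨haE, hc⟩ := ha
    have hmem : a.2 ∈ A a.1 := by
      by_cases hm2 : a.2 ∈ A a.1
      · exact hm2
      · rw [if_neg hm2] at hc; exact absurd hc (by decide)
    intro heq
    rw [Prod.mk.injEq] at heq
    obtain ⟨h1, _⟩ := heq
    rw [hout0, hout0] at h1
    exact key0 a haE hmem h1.symm
  have hW1 : WeakLI (E.filter fun a => (if a.2 ∈ A a.1 then (0 : Fin 2) else 1) = 1) := by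
    intro a ha
    rw [Finset.mem_filter] at ha
    obtain ⟨haE, hc⟩ := ha
    have hmem : a.2 ∉ A a.1 := by
      intro hm2
      rw [if_pos hm2] at hc; exact absurd hc (by decide)
    intro heq
    rw [Prod.mk.injEq] at heq
    obtain ⟨h1, _⟩ := heq
    have hs1 := houtsplit a.1
    have hs2 := houtsplit a.2
    have ho1 := hout0 a.1
    have ho2 := hout0 a.2
    have hk := key1 a haE hmem
    have hle1 := hAle a.1
    have hle2 := hAle a.2
    omega
  intro i
  fin_cases i
  · exact hW0
  · exact hW1
end

section
/- Every symmetric digraph D satisfies slir(D) ≤ 2, i.e., its arc set can be 2-colored so that each color class induces a strong locally irregular digraph. -/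
section Aux
variable {V : Type*} [DecidableEq V]

lemma outdeg_insert_of_eq {a : V × V} {S : Finset (V × V)} {v : V}
    (ha : a ∉ S) (h : a.1 = v) : outdeg (insert a S) v = outdeg S v + 1 := by
  unfold outdeg
  rw [Finset.filter_insert, if_pos h, Finset.card_insert_of_notMem (by
    simp only [Finset.mem_filter]; exact fun hc => ha hc.1)]

lemma outdeg_insert_of_ne {a : V × V} {S : Finset (V × V)} {v : V}
    (h : a.1 ≠ v) : outdeg (insert a S) v = outdeg S v := by
  unfold outdeg
  rw [Finset.filter_insert, if_neg h]

lemma outdeg_erase_of_eq {a : V × V} {S : Finset (V × V)} {v : V}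
    (ha : a ∈ S) (h : a.1 = v) : outdeg (S.erase a) v + 1 = outdeg S v := by
  unfold outdeg
  rw [Finset.filter_erase]
  exact Finset.card_erase_add_one (by simp [Finset.mem_filter, ha, h])

lemma outdeg_erase_of_ne {a : V × V} {S : Finset (V × V)} {v : V}
    (h : a.1 ≠ v) : outdeg (S.erase a) v = outdeg S v := by
  unfold outdeg
  rw [Finset.filter_erase, Finset.erase_eq_of_notMem (by
    simp only [Finset.mem_filter]; exact fun hc => h hc.2)]

lemma indeg_insert_of_eq {a : V × V} {S : Finset (V × V)} {v : V}
    (ha : a ∉ S) (h : a.2 = v) : indeg (insert a S) v = indeg S v + 1 := by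
  unfold indeg
  rw [Finset.filter_insert, if_pos h, Finset.card_insert_of_notMem (by
    simp only [Finset.mem_filter]; exact fun hc => ha hc.1)]

lemma indeg_insert_of_ne {a : V × V} {S : Finset (V × V)} {v : V}
    (h : a.2 ≠ v) : indeg (insert a S) v = indeg S v := by
  unfold indeg
  rw [Finset.filter_insert, if_neg h]

lemma indeg_erase_of_eq {a : V × V} {S : Finset (V × V)} {v : V}
    (ha : a ∈ S) (h : a.2 = v) : indeg (S.erase a) v + 1 = indeg S v := by
  unfold indeg
  rw [Finset.filter_erase]
  exact Finset.card_erase_add_one (by simp [Finset.mem_filter, ha, h])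

lemma indeg_erase_of_ne {a : V × V} {S : Finset (V × V)} {v : V}
    (h : a.2 ≠ v) : indeg (S.erase a) v = indeg S v := by
  unfold indeg
  rw [Finset.filter_erase, Finset.erase_eq_of_notMem (by
    simp only [Finset.mem_filter]; exact fun hc => h hc.2)]

lemma outdeg_map_swap (S : Finset (V × V)) (v : V) :
    outdeg (S.map ⟨Prod.swap, Prod.swap_injective⟩) v = indeg S v := by
  unfold outdeg indeg
  rw [Finset.filter_map]
  rw [Finset.card_map]
  congr 1

lemma indeg_map_swap (S : Finset (V × V)) (v : V) :
    indeg (S.map ⟨Prod.swap, Prod.swap_injective⟩) v = outdeg S v := by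
  unfold outdeg indeg
  rw [Finset.filter_map]
  rw [Finset.card_map]
  congr 1

lemma bdeg_map_swap (S : Finset (V × V)) (v : V) :
    bdeg (S.map ⟨Prod.swap, Prod.swap_injective⟩) v = - bdeg S v := by
  unfold bdeg
  rw [outdeg_map_swap, indeg_map_swap]
  ring

end Aux

theorem stmt14 {V : Type*} [DecidableEq V] (E : Finset (V × V))
    (hloop : ∀ v : V, (v, v) ∉ E)
    (hsym : ∀ u v : V, (u, v) ∈ E → (v, u) ∈ E) :
    slirLe E 2 := by
  classical
  -- support vertex set
  set s : Finset V := E.image Prod.fst ∪ E.image Prod.snd with hs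
  -- the set of orientations of E
  set P : Finset (V × V) → Prop :=
    fun O => ∀ a ∈ E, (a ∈ O ↔ (a.2, a.1) ∉ O) with hP
  set 𝒪 : Finset (Finset (V × V)) := E.powerset.filter P with h𝒪
  -- an initial orientation via an arbitrary indexing of the support
  have hne : 𝒪.Nonempty := by
    set r : V → ℕ := fun v => s.toList.idxOf v with hr
    refine ⟨E.filter (fun a => r a.1 < r a.2), ?_⟩
    rw [h𝒪, Finset.mem_filter]
    refine ⟨Finset.mem_powerset.2 (Finset.filter_subset _ _), ?_⟩
    intro a ha
    have h1 : a.1 ∈ s := Finset.mem_union_left _ (Finset.mem_image_of_mem _ ha)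
    have h2 : a.2 ∈ s := Finset.mem_union_right _ (Finset.mem_image_of_mem _ ha)
    have hne12 : a.1 ≠ a.2 := by
      intro h; apply hloop a.1; rw [← Prod.mk.eta (p := a), ← h] at ha; exact ha
    have hrne : r a.1 ≠ r a.2 := fun h =>
      hne12 ((List.idxOf_inj (Finset.mem_toList.2 h1)).1 h)
    have ha' : (a.2, a.1) ∈ E := hsym _ _ (by simpa using ha)
    simp only [Finset.mem_filter, ha, ha', true_and]
    omega
  -- take an orientation maximizing the sum of squared balanced degrees
  obtain ⟨O, hO, hmax⟩ := Finset.exists_max_image 𝒪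
    (fun O => ∑ v ∈ s, (bdeg O v) ^ 2) hne
  rw [h𝒪, Finset.mem_filter, Finset.mem_powerset] at hO
  obtain ⟨hOE, hOP⟩ := hO
  rw [hP] at hOP
  -- key property : the maximizing orientation is strongly locally irregular
  have hkey : ∀ a ∈ O, bdeg O a.1 ≠ bdeg O a.2 := by
    rintro ⟨u, v⟩ huv heq
    simp only at heq
    have huvE : (u, v) ∈ E := hOE huv
    have hvuE : (v, u) ∈ E := hsym _ _ huvE
    have hne12 : u ≠ v := fun h => hloop u (h ▸ huvE)
    have hvuO : (v, u) ∉ O := fun h => ((hOP _ hvuE).1 h) huv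
    -- flip the bad arc
    set O' : Finset (V × V) := insert (v, u) (O.erase (u, v)) with hO'
    have hvuO'e : (v, u) ∉ O.erase (u, v) := fun h => hvuO (Finset.mem_of_mem_erase h)
    -- membership description of O'
    have hmemO' : ∀ b : V × V, b ∈ O' ↔ (b = (v, u) ∨ (b ∈ O ∧ b ≠ (u, v))) := by
      intro b
      rw [hO', Finset.mem_insert, Finset.mem_erase]
      tauto
    -- O' is an orientation
    have hO'mem : O' ∈ 𝒪 := by
      rw [h𝒪, Finset.mem_filter, Finset.mem_powerset]
      constructor
      · intro b hb
        rcases (hmemO' b).1 hb with h | h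
        · rw [h]; exact hvuE
        · exact hOE h.1
      · rw [hP]
        intro a ha
        have luv : (u, v) ∉ O' := by
          intro hc
          rcases (hmemO' _).1 hc with h | h
          · exact hne12 (congrArg Prod.fst h)
          · exact h.2 rfl
        have lvu : (v, u) ∈ O' := (hmemO' _).2 (Or.inl rfl)
        by_cases h1 : a = (u, v)
        · subst h1
          exact iff_of_false luv (not_not_intro lvu)
        · by_cases h2 : a = (v, u)
          · subst h2
            exact iff_of_true lvu luv
          · have h3 : (a.2, a.1) ≠ (v, u) := by
              intro h
              apply h1
              have := Prod.ext_iff.1 h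
              exact Prod.ext this.2 this.1
            have h4 : (a.2, a.1) ≠ (u, v) := by
              intro h
              apply h2
              have := Prod.ext_iff.1 h
              exact Prod.ext this.2 this.1
            simp only [hmemO']
            constructor
            · rintro (h | h) hc
              · exact h2 h
              · rcases hc with hc | hc
                · exact h3 hc
                · exact ((hOP a ha).1 h.1) hc.1
            · intro h
              refine Or.inr ⟨?_, h1⟩
              rw [hOP a ha]
              intro hc
              exact h (Or.inr ⟨hc, h4⟩)
    -- balanced degree changes
    have hbu : bdeg O' u = bdeg O u - 2 := by
      have ho : outdeg O' u + 1 = outdeg O u := by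
        rw [hO', outdeg_insert_of_ne (by simpa using hne12.symm)]
        exact outdeg_erase_of_eq huv rfl
      have hi : indeg O' u = indeg O u + 1 := by
        rw [hO', indeg_insert_of_eq hvuO'e rfl,
          indeg_erase_of_ne (by simpa using hne12.symm)]
      unfold bdeg
      rw [hi]
      push_cast
      omega
    have hbv : bdeg O' v = bdeg O v + 2 := by
      have ho : outdeg O' v = outdeg O v + 1 := by
        rw [hO', outdeg_insert_of_eq hvuO'e rfl,
          outdeg_erase_of_ne (by simpa using hne12)]
      have hi : indeg O' v + 1 = indeg O v := by
        rw [hO', indeg_insert_of_ne (by simpa using hne12)]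
        exact indeg_erase_of_eq huv rfl
      unfold bdeg
      rw [ho]
      push_cast
      omega
    have hbw : ∀ w : V, w ≠ u → w ≠ v → bdeg O' w = bdeg O w := by
      intro w hwu hwv
      unfold bdeg
      rw [hO', outdeg_insert_of_ne (by simpa using hwv.symm),
        outdeg_erase_of_ne (by simpa using hwu.symm),
        indeg_insert_of_ne (by simpa using hwu.symm),
        indeg_erase_of_ne (by simpa using hwv.symm)]
    -- sum comparison
    have hu : u ∈ s := Finset.mem_union_left _ (Finset.mem_image_of_mem _ huvE)
    have hv : v ∈ s := Finset.mem_union_right _ (Finset.mem_image_of_mem _ huvE)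
    have hv' : v ∈ s.erase u := Finset.mem_erase.2 ⟨hne12.symm, hv⟩
    have hsplit : ∀ Q : Finset (V × V), ∑ w ∈ s, (bdeg Q w) ^ 2 =
        (bdeg Q u) ^ 2 + ((bdeg Q v) ^ 2 +
          ∑ w ∈ (s.erase u).erase v, (bdeg Q w) ^ 2) := by
      intro Q
      rw [← Finset.add_sum_erase _ _ hu, ← Finset.add_sum_erase _ _ hv']
    have hT : ∑ w ∈ (s.erase u).erase v, (bdeg O' w) ^ 2 =
        ∑ w ∈ (s.erase u).erase v, (bdeg O w) ^ 2 := by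
      apply Finset.sum_congr rfl
      intro w hw
      have hw1 := (Finset.mem_erase.1 hw).1
      have hw2 := (Finset.mem_erase.1 (Finset.mem_erase.1 hw).2).1
      rw [hbw w hw2 hw1]
    have hle := hmax O' hO'mem
    rw [hsplit O', hsplit O, hT, hbu, hbv, heq] at hle
    nlinarith [hle]
  -- the 2-coloring
  refine ⟨fun a => if a ∈ O then 0 else 1, ?_⟩
  have hfilter0 : E.filter (fun a => (if a ∈ O then (0 : Fin 2) else 1) = 0) = O := by
    ext a
    simp only [Finset.mem_filter]
    constructor
    · rintro ⟨haE, hc⟩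
      by_contra h
      rw [if_neg h] at hc
      exact one_ne_zero hc
    · intro h
      exact ⟨hOE h, by rw [if_pos h]⟩
  have hfilter1 : E.filter (fun a => (if a ∈ O then (0 : Fin 2) else 1) = 1) =
      O.map ⟨Prod.swap, Prod.swap_injective⟩ := by
    ext a
    simp only [Finset.mem_filter, Finset.mem_map, Function.Embedding.coeFn_mk]
    constructor
    · rintro ⟨haE, hc⟩
      have haO : a ∉ O := by
        intro h; rw [if_pos h] at hc; exact zero_ne_one hc
      have : (a.2, a.1) ∈ O := by
        by_contra h
        exact haO ((hOP a haE).2 h)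
      exact ⟨(a.2, a.1), this, by simp⟩
    · rintro ⟨b, hbO, rfl⟩
      have hbE : b ∈ E := hOE hbO
      have hswapE : b.swap ∈ E := hsym _ _ (by simpa using hbE)
      have hns : b.swap ∉ O := by
        intro h
        have := (hOP b.swap hswapE).1 h
        simp only [Prod.fst_swap, Prod.snd_swap, Prod.mk.eta] at this
        exact this hbO
      exact ⟨hswapE, by rw [if_neg hns]⟩
  have key1 : StrongLI O := hkey
  have key2 : StrongLI (O.map ⟨Prod.swap, Prod.swap_injective⟩) := by
    intro a ha
    rw [bdeg_map_swap, bdeg_map_swap]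
    simp only [Finset.mem_map, Function.Embedding.coeFn_mk] at ha
    obtain ⟨b, hbO, rfl⟩ := ha
    have hne := hkey b hbO
    simp only [Prod.fst_swap, Prod.snd_swap, ne_eq, neg_inj]
    exact fun h => hne h.symm
  intro i
  fin_cases i
  · show StrongLI (E.filter fun a => (if a ∈ O then (0 : Fin 2) else 1) = 0)
    rw [hfilter0]
    exact key1
  · show StrongLI (E.filter fun a => (if a ∈ O then (0 : Fin 2) else 1) = 1)
    rw [hfilter1]
    exact key2
end

section
/- If D is a digraph whose skeleton is bipartite, then slir(D) ≤ 2. -/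
theorem stmt15 {V : Type*} [DecidableEq V] (E : Finset (V × V))
    (hloop : ∀ v : V, (v, v) ∉ E)
    (hbip : (skeleton E).Colorable 2) :
    slirLe E 2 := by
  obtain ⟨col⟩ := hbip
  refine ⟨fun a => col a.1, fun i a ha => ?_⟩
  rw [Finset.mem_filter] at ha
  obtain ⟨haE, hc⟩ := ha
  replace hc : col a.1 = i := hc
  set F := E.filter (fun a => col a.1 = i) with hF
  have hne : a.1 ≠ a.2 := by
    intro h
    exact hloop a.1 (by rwa [show a = (a.1, a.2) from rfl, ← h] at haE)
  have hcol : ∀ b ∈ E, col b.1 ≠ col b.2 := by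
    intro b hb
    have hbne : b.1 ≠ b.2 := by
      intro h
      exact hloop b.1 (by rwa [show b = (b.1, b.2) from rfl, ← h] at hb)
    exact col.valid ⟨hbne, Or.inl hb⟩
  -- indegree of a.1 in F is 0
  have hin1 : indeg F a.1 = 0 := by
    rw [indeg, Finset.card_eq_zero, Finset.eq_empty_iff_forall_notMem]
    intro b hb
    rw [Finset.mem_filter, hF, Finset.mem_filter] at hb
    obtain ⟨⟨hbE, hbc⟩, hb2⟩ := hb
    exact hcol b hbE (by rw [hbc, hb2, hc])
  -- outdegree of a.2 in F is 0
  have hout2 : outdeg F a.2 = 0 := by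
    rw [outdeg, Finset.card_eq_zero, Finset.eq_empty_iff_forall_notMem]
    intro b hb
    rw [Finset.mem_filter, hF, Finset.mem_filter] at hb
    obtain ⟨⟨hbE, hbc⟩, hb1⟩ := hb
    have : col a.1 ≠ col a.2 := hcol a haE
    rw [hb1] at hbc
    exact this (hc.trans hbc.symm)
  have hmemF : a ∈ F := by rw [hF, Finset.mem_filter]; exact ⟨haE, hc⟩
  have hout1 : 1 ≤ outdeg F a.1 := by
    rw [outdeg, Finset.one_le_card]
    exact ⟨a, Finset.mem_filter.mpr ⟨hmemF, rfl⟩⟩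
  have hin2 : 1 ≤ indeg F a.2 := by
    rw [indeg, Finset.one_le_card]
    exact ⟨a, Finset.mem_filter.mpr ⟨hmemF, rfl⟩⟩
  have h1 : (1 : ℤ) ≤ bdeg F a.1 := by
    rw [bdeg, hin1]
    push_cast
    omega
  have h2 : bdeg F a.2 ≤ -1 := by
    rw [bdeg, hout2]
    have : (1 : ℤ) ≤ (indeg F a.2 : ℤ) := by exact_mod_cast hin2
    omega
  intro h
  rw [h] at h1
  omega
end

section
/- If the skeleton of a digraph D is tripartite, then slir(D) ≤ 3. -/
theorem stmt16 {V : Type*} [DecidableEq V] (E : Finset (V × V))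
    (hloop : ∀ v : V, (v, v) ∉ E)
    (htri : (skeleton E).Colorable 3) :
    slirLe E 3 := by
  obtain ⟨col⟩ := htri
  have key : ∀ b ∈ E, col b.1 ≠ col b.2 := by
    intro b hb
    have hbE : (b.1, b.2) ∈ E := by simpa using hb
    have hne : b.1 ≠ b.2 := by
      intro h
      exact hloop b.1 (h ▸ hbE)
    exact col.valid ⟨hne, Or.inl hbE⟩
  refine ⟨fun a => col a.1, fun i a ha => ?_⟩
  rw [Finset.mem_filter] at ha
  obtain ⟨haE, hcol⟩ := ha
  have hc2 : col a.2 ≠ i := fun h => key a haE (hcol.trans h.symm)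
  set F := E.filter (fun a => col a.1 = i) with hF
  have hind1 : indeg F a.1 = 0 := by
    rw [indeg, Finset.card_eq_zero, Finset.filter_eq_empty_iff]
    intro b hb h2
    rw [hF, Finset.mem_filter] at hb
    exact key b hb.1 (hb.2.trans (((congrArg col h2).trans hcol).symm))
  have hout2 : outdeg F a.2 = 0 := by
    rw [outdeg, Finset.card_eq_zero, Finset.filter_eq_empty_iff]
    intro b hb h1
    rw [hF, Finset.mem_filter] at hb
    exact hc2 ((congrArg col h1).symm.trans hb.2)
  have haF : a ∈ F := by
    rw [hF, Finset.mem_filter]; exact ⟨haE, hcol⟩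
  have hout1 : 1 ≤ outdeg F a.1 := by
    rw [outdeg]
    exact Finset.card_pos.mpr ⟨a, Finset.mem_filter.mpr ⟨haF, rfl⟩⟩
  have hind2 : 1 ≤ indeg F a.2 := by
    rw [indeg]
    exact Finset.card_pos.mpr ⟨a, Finset.mem_filter.mpr ⟨haF, rfl⟩⟩
  unfold bdeg
  rw [hind1, hout2]
  omega
end

section
/- For every integer k ≥ 2 and every digraph D, there is an assignment c : E(D) → {1, k} such that the function φ(v) = Σ_{vx ∈ E(D)} c(vx) − Σ_{yv ∈ E(D)} c(yv) satisfies φ(u) ≠ φ(v) for every arc uv of D. -/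
section AuxStmt18
variable {V : Type*} [DecidableEq V]

/-- Weight function determined by a set `S` of heavy arcs. -/
def flipWgt (k : ℕ) (S : Finset (V × V)) (a : V × V) : ℤ :=
  if a ∈ S then (k : ℤ) else 1

def phiW (E : Finset (V × V)) (k : ℕ) (S : Finset (V × V)) (v : V) : ℤ :=
  (∑ b ∈ E.filter fun b => b.1 = v, flipWgt k S b) -
    ∑ b ∈ E.filter fun b => b.2 = v, flipWgt k S b

lemma sum_flipWgt_shift (E : Finset (V × V)) (k : ℕ) (S S' : Finset (V × V))
    (a : V × V) (δ : ℤ) (h : ∀ b, flipWgt k S' b = flipWgt k S b + (if b = a then δ else 0))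
    (p : V × V → Prop) [DecidablePred p] :
    ∑ b ∈ E.filter p, flipWgt k S' b =
      (∑ b ∈ E.filter p, flipWgt k S b) + (if a ∈ E.filter p then δ else 0) := by
  simp only [h, Finset.sum_add_distrib]
  congr 1
  rw [Finset.sum_ite_eq' (E.filter p) a (fun _ => δ)]

end AuxStmt18

theorem stmt18 {V : Type*} [DecidableEq V] (E : Finset (V × V))
    (hloop : ∀ v : V, (v, v) ∉ E) (k : ℕ) (hk : 2 ≤ k) :
    ∃ c : V × V → ℤ,
      (∀ a ∈ E, c a = 1 ∨ c a = (k : ℤ)) ∧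
      ∀ a ∈ E,
        ((∑ b ∈ E.filter fun b => b.1 = a.1, c b) -
            ∑ b ∈ E.filter fun b => b.2 = a.1, c b) ≠
        ((∑ b ∈ E.filter fun b => b.1 = a.2, c b) -
            ∑ b ∈ E.filter fun b => b.2 = a.2, c b) := by
  classical
  set Vs : Finset V := E.image Prod.fst ∪ E.image Prod.snd with hVsdef
  set F : Finset (V × V) → ℤ := fun S => ∑ v ∈ Vs, (phiW E k S v) ^ 2 with hFdef
  obtain ⟨S, hS, hmax⟩ := E.powerset.exists_max_image F ⟨∅, Finset.empty_mem_powerset E⟩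
  rw [Finset.mem_powerset] at hS
  refine ⟨flipWgt k S, fun a _ => ?_, fun a ha hcon => ?_⟩
  · by_cases h : a ∈ S
    · exact Or.inr (if_pos h)
    · exact Or.inl (if_neg h)
  · -- hcon : phiW E k S a.1 = phiW E k S a.2 (definitionally)
    have hcon' : phiW E k S a.1 = phiW E k S a.2 := hcon
    have hne : a.1 ≠ a.2 := by
      intro h
      exact hloop a.1 (by rwa [show (a.1, a.1) = a by rw [Prod.ext_iff]; exact ⟨rfl, h⟩])
    set δ : ℤ := if a ∈ S then 1 - (k : ℤ) else (k : ℤ) - 1 with hδdef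
    have hk1 : (1 : ℤ) < (k : ℤ) := by exact_mod_cast hk
    have hδ : δ ≠ 0 := by
      rw [hδdef]; split_ifs <;> omega
    set S' : Finset (V × V) := if a ∈ S then S.erase a else insert a S with hS'def
    have hS' : S' ⊆ E := by
      rw [hS'def]; split_ifs
      · exact (S.erase_subset a).trans hS
      · exact Finset.insert_subset ha hS
    have hw : ∀ b, flipWgt k S' b = flipWgt k S b + (if b = a then δ else 0) := by
      intro b
      by_cases hb : b = a
      · subst hb
        by_cases h : b ∈ S <;> simp [flipWgt, hS'def, hδdef, h]
      · have hmem : b ∈ S' ↔ b ∈ S := by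
          rw [hS'def]; split_ifs <;> simp [hb]
        simp [flipWgt, hb, hmem]
    have hφ : ∀ v, phiW E k S' v =
        phiW E k S v + ((if a.1 = v then δ else 0) - (if a.2 = v then δ else 0)) := by
      intro v
      have h1 := sum_flipWgt_shift E k S S' a δ hw (fun b => b.1 = v)
      have h2 := sum_flipWgt_shift E k S S' a δ hw (fun b => b.2 = v)
      have e1 : (a ∈ E.filter fun b => b.1 = v) ↔ a.1 = v := by
        simp [Finset.mem_filter, ha]
      have e2 : (a ∈ E.filter fun b => b.2 = v) ↔ a.2 = v := by
        simp [Finset.mem_filter, ha]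
      simp only [phiW, h1, h2]
      by_cases hv1 : a.1 = v <;> by_cases hv2 : a.2 = v <;>
        simp [e1, e2, hv1, hv2] <;> ring
    -- compute F S'
    set d : V → ℤ := fun v => (if a.1 = v then δ else 0) - (if a.2 = v then δ else 0) with hddef
    have hmem1 : a.1 ∈ Vs :=
      Finset.mem_union.mpr (Or.inl (Finset.mem_image_of_mem Prod.fst ha))
    have hmem2 : a.2 ∈ Vs :=
      Finset.mem_union.mpr (Or.inr (Finset.mem_image_of_mem Prod.snd ha))
    have hsplit : F S' = F S + ∑ v ∈ Vs, (2 * phiW E k S v * d v + (d v) ^ 2) := by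
      rw [hFdef]
      simp only [hφ]
      rw [← Finset.sum_add_distrib]
      congr 1
      ext v
      ring
    have hrest : ∑ v ∈ Vs, (2 * phiW E k S v * d v + (d v) ^ 2)
        = ∑ v ∈ ({a.1, a.2} : Finset V), (2 * phiW E k S v * d v + (d v) ^ 2) := by
      symm
      apply Finset.sum_subset
      · intro v hv
        rcases Finset.mem_insert.mp hv with h | h
        · exact h ▸ hmem1
        · exact (Finset.mem_singleton.mp h) ▸ hmem2
      · intro v _ hv
        have hd : d v = 0 := by
          rw [hddef]
          have h1 : a.1 ≠ v := fun h => hv (by simp [← h])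
          have h2 : a.2 ≠ v := fun h => hv (by simp [← h])
          simp [h1, h2]
        simp [hd]
    have hpair : ∑ v ∈ ({a.1, a.2} : Finset V), (2 * phiW E k S v * d v + (d v) ^ 2)
        = 2 * δ ^ 2 := by
      rw [Finset.sum_pair hne]
      have hd1 : d a.1 = δ := by rw [hddef]; simp [hne.symm]
      have hd2 : d a.2 = -δ := by rw [hddef]; simp [hne]
      rw [hd1, hd2, hcon']
      ring
    have hgt : F S < F S' := by
      rw [hsplit, hrest, hpair]
      have : 0 < δ ^ 2 := lt_of_le_of_ne (sq_nonneg δ) (Ne.symm (pow_ne_zero 2 hδ))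
      linarith
    exact absurd (hmax S' (Finset.mem_powerset.mpr hS')) (not_le.mpr hgt)
end

section
/- If D is an Eulerian digraph (connected with d^+(v) = d^-(v) for every vertex v), then slir(D) ≤ 2. -/
section SlirAux
variable {V : Type*} [DecidableEq V]

lemma outdeg_insert (A : Finset (V × V)) (a : V × V) (ha : a ∉ A) (w : V) :
    outdeg (insert a A) w = outdeg A w + (if a.1 = w then 1 else 0) := by
  unfold outdeg
  rw [Finset.filter_insert]
  split_ifs with h
  · rw [Finset.card_insert_of_notMem (fun hc => ha (Finset.mem_filter.1 hc).1)]
  · simp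

lemma indeg_insert (A : Finset (V × V)) (a : V × V) (ha : a ∉ A) (w : V) :
    indeg (insert a A) w = indeg A w + (if a.2 = w then 1 else 0) := by
  unfold indeg
  rw [Finset.filter_insert]
  split_ifs with h
  · rw [Finset.card_insert_of_notMem (fun hc => ha (Finset.mem_filter.1 hc).1)]
  · simp

lemma bdeg_insert (A : Finset (V × V)) (a : V × V) (ha : a ∉ A) (w : V) :
    bdeg (insert a A) w
      = bdeg A w + (if a.1 = w then 1 else 0) - (if a.2 = w then 1 else 0) := by
  unfold bdeg
  rw [outdeg_insert A a ha w, indeg_insert A a ha w]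
  push_cast
  split_ifs <;> ring

lemma bdeg_split (E A : Finset (V × V)) (hA : A ⊆ E) (w : V) :
    bdeg E w = bdeg A w + bdeg (E \ A) w := by
  have ho : outdeg E w = outdeg A w + outdeg (E \ A) w := by
    unfold outdeg
    rw [← Finset.card_union_of_disjoint
      (Finset.disjoint_filter_filter Finset.disjoint_sdiff),
      ← Finset.filter_union, Finset.union_sdiff_of_subset hA]
  have hi : indeg E w = indeg A w + indeg (E \ A) w := by
    unfold indeg
    rw [← Finset.card_union_of_disjoint
      (Finset.disjoint_filter_filter Finset.disjoint_sdiff),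
      ← Finset.filter_union, Finset.union_sdiff_of_subset hA]
  unfold bdeg
  rw [ho, hi]
  push_cast
  ring

lemma sum_sq_insert (S : Finset V) (B : Finset (V × V)) (u v : V)
    (ha : (u, v) ∉ B) (huv : u ≠ v) (hu : u ∈ S) (hv : v ∈ S) :
    ∑ w ∈ S, (bdeg (insert (u, v) B) w) ^ 2
      = ∑ w ∈ S, (bdeg B w) ^ 2 + 2 * (bdeg B u - bdeg B v) + 2 := by
  have hb := bdeg_insert B (u, v) ha
  have hsub : ({u, v} : Finset V) ⊆ S :=
    Finset.insert_subset hu (Finset.singleton_subset_iff.2 hv)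
  have hsplit : ∑ w ∈ S, ((bdeg (insert (u, v) B) w) ^ 2 - (bdeg B w) ^ 2)
      = 2 * (bdeg B u - bdeg B v) + 2 := by
    rw [← Finset.sum_subset hsub (fun w _ hw => ?_)]
    · rw [Finset.sum_pair huv, hb u, hb v,
        if_pos rfl, if_pos rfl, if_neg (fun h : v = u => huv h.symm), if_neg huv]
      ring
    · simp only [Finset.mem_insert, Finset.mem_singleton, not_or] at hw
      rw [hb w, if_neg (fun h : u = w => hw.1 h.symm),
        if_neg (fun h : v = w => hw.2 h.symm)]
      ring
  rw [Finset.sum_sub_distrib] at hsplit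
  linarith


end SlirAux

theorem stmt19 {V : Type*} [DecidableEq V] (E : Finset (V × V))
    (hloop : ∀ v : V, (v, v) ∉ E)
    (hconn : (skeleton E).Connected)
    (heul : ∀ v : V, outdeg E v = indeg E v) :
    slirLe E 2 := by
  classical
  have hbE : ∀ v, bdeg E v = 0 := fun v => by simp [bdeg, heul v]
  set S := E.image Prod.fst ∪ E.image Prod.snd with hSdef
  obtain ⟨A, hAm, hmax⟩ := Finset.exists_max_image E.powerset
    (fun A => ∑ w ∈ S, (bdeg A w) ^ 2) ⟨∅, Finset.empty_mem_powerset E⟩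
  rw [Finset.mem_powerset] at hAm
  have key : ∀ a ∈ E, bdeg A a.1 ≠ bdeg A a.2 := by
    rintro ⟨u, v⟩ hmem heq
    have heq' : bdeg A u = bdeg A v := heq
    have huv : u ≠ v := fun h => hloop v (h ▸ hmem)
    have hu : u ∈ S := Finset.mem_union_left _ (Finset.mem_image_of_mem Prod.fst hmem)
    have hv : v ∈ S := Finset.mem_union_right _ (Finset.mem_image_of_mem Prod.snd hmem)
    by_cases hin : (u, v) ∈ A
    · -- erase it: the sum strictly increases
      set B := A.erase (u, v) with hBdef
      have hnB : (u, v) ∉ B := Finset.notMem_erase _ _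
      have hAB : A = insert (u, v) B := (Finset.insert_erase hin).symm
      have hsum := sum_sq_insert S B u v hnB huv hu hv
      have hbu : bdeg A u = bdeg B u + 1 := by
        rw [hAB, bdeg_insert B (u, v) hnB u, if_pos rfl,
          if_neg (fun h : v = u => huv h.symm)]
        ring
      have hbv : bdeg A v = bdeg B v - 1 := by
        rw [hAB, bdeg_insert B (u, v) hnB v, if_neg huv, if_pos rfl]
        ring
      have hBsub : B ∈ E.powerset :=
        Finset.mem_powerset.2 (fun x hx => hAm (Finset.mem_erase.1 hx).2)
      have hle := hmax B hBsub
      rw [← hAB] at hsum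
      have : bdeg B u - bdeg B v = -2 := by omega
      rw [this] at hsum
      omega
    · -- insert it: the sum strictly increases
      have hsum := sum_sq_insert S A u v hin huv hu hv
      have hIsub : insert (u, v) A ∈ E.powerset :=
        Finset.mem_powerset.2 (Finset.insert_subset hmem hAm)
      have hle := hmax _ hIsub
      rw [heq'] at hsum
      omega
  refine ⟨fun a => if a ∈ A then 0 else 1, ?_⟩
  have hne : (1 : Fin 2) ≠ 0 := by decide
  have hf0 : (E.filter fun a => (if a ∈ A then (0 : Fin 2) else 1) = 0) = A := by
    ext a
    simp only [Finset.mem_filter]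
    constructor
    · rintro ⟨hE, hc⟩
      by_contra hn
      rw [if_neg hn] at hc
      exact hne hc
    · intro hA
      exact ⟨hAm hA, by rw [if_pos hA]⟩
  have hf1 : (E.filter fun a => (if a ∈ A then (0 : Fin 2) else 1) = 1) = E \ A := by
    ext a
    simp only [Finset.mem_filter, Finset.mem_sdiff]
    constructor
    · rintro ⟨hE, hc⟩
      refine ⟨hE, fun hA => ?_⟩
      rw [if_pos hA] at hc
      exact hne hc.symm
    · rintro ⟨hE, hA⟩
      exact ⟨hE, by rw [if_neg hA]⟩
  intro i
  fin_cases i <;> simp only [Fin.zero_eta, Fin.mk_one]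
  · rw [hf0]
    intro a ha
    exact key a (hAm ha)
  · rw [hf1]
    intro a ha heq
    have haE : a ∈ E := (Finset.mem_sdiff.1 ha).1
    have h1 := bdeg_split E A hAm a.1
    have h2 := bdeg_split E A hAm a.2
    rw [hbE a.1] at h1
    rw [hbE a.2] at h2
    exact key a haE (by omega)
end
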